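/- arXiv:1706.10251 — 4 statements merged into one kernel-verified Lean document; each statement's English description precedes it below -/
import Mathlib

section
/- For every k ≥ 1 and every real x, the Chebyshev polynomial of the first kind T_k satisfies the identity ∫_{-1}^{1} (T_k'(x) - T_k'(y))/(x - y) · (2/π)√(1-y²) dy = 2x·T_k'(x) - 2k·T_k(x), where the integrand is interpreted as T_k''(x) at y = x. -/
open MeasureTheory Real Polynomial

/-- The `k`-th Chebyshev polynomial of the first kind, as a function `ℝ → ℝ`. -/
noncomputable def chebT (k : ℤ) (x : ℝ) : ℝ := (Polynomial.Chebyshev.T ℝ k).eval x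

/-- Its derivative `T_k'` as a function. -/
noncomputable def chebT' (k : ℤ) (x : ℝ) : ℝ :=
  (Polynomial.derivative (Polynomial.Chebyshev.T ℝ k)).eval x

/-- Its second derivative `T_k''` as a function. -/
noncomputable def chebT'' (k : ℤ) (x : ℝ) : ℝ :=
  (Polynomial.derivative (Polynomial.derivative (Polynomial.Chebyshev.T ℝ k))).eval x

/-- The density of the semicircle law on `(-1,1)`. -/
noncomputable def semicircleDensity (y : ℝ) : ℝ := (2 / Real.pi) * Real.sqrt (1 - y ^ 2)

namespace ChebAux

open Polynomial.Chebyshev Set intervalIntegral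

/-! ### The linear functional `L` -/

noncomputable def L (p : ℝ[X]) : ℝ :=
  ∫ y in Set.Ioo (-1 : ℝ) 1, p.eval y * semicircleDensity y

lemma contAux (p : ℝ[X]) : Continuous fun y : ℝ => p.eval y * semicircleDensity y := by
  unfold semicircleDensity
  exact (p.continuous_aeval).mul
    (continuous_const.mul ((continuous_const.sub (continuous_pow 2)).sqrt))

lemma integrableOnAux (p : ℝ[X]) :
    IntegrableOn (fun y : ℝ => p.eval y * semicircleDensity y) (Set.Ioo (-1) 1) := by
  exact ((contAux p).integrableOn_Icc).mono_set Set.Ioo_subset_Icc_self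

lemma L_add (p q : ℝ[X]) : L (p + q) = L p + L q := by
  unfold L
  simp_rw [eval_add, add_mul]
  exact integral_add (integrableOnAux p) (integrableOnAux q)

lemma L_sub (p q : ℝ[X]) : L (p - q) = L p - L q := by
  unfold L
  simp_rw [eval_sub, sub_mul]
  exact integral_sub (integrableOnAux p) (integrableOnAux q)

lemma L_Cmul (c : ℝ) (p : ℝ[X]) : L (C c * p) = c * L p := by
  unfold L
  simp_rw [eval_mul, eval_C, mul_assoc]
  exact MeasureTheory.integral_const_mul c _

/-! ### The basic orthogonality computation: `L (U n) = δ_{n 0}` -/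

lemma integral_cos_nat (m : ℕ) :
    ∫ θ in (0:ℝ)..π, Real.cos (m * θ) = if m = 0 then π else 0 := by
  rcases Nat.eq_zero_or_pos m with hm | hm
  · simp [hm]
  · rw [if_neg hm.ne']
    have hm' : (m : ℝ) ≠ 0 := Nat.cast_ne_zero.mpr hm.ne'
    rw [intervalIntegral.integral_comp_mul_left (fun x => Real.cos x) hm']
    simp [integral_cos, Real.sin_nat_mul_pi]

lemma L_U (n : ℕ) : L (U ℝ n) = if n = 0 then 1 else 0 := by
  have h1 : L (U ℝ n) = ∫ y in (-1:ℝ)..1, (U ℝ n).eval y * semicircleDensity y := by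
    rw [intervalIntegral.integral_of_le (by norm_num : (-1:ℝ) ≤ 1),
      MeasureTheory.integral_Ioc_eq_integral_Ioo]
    rfl
  have hderiv : ∀ θ ∈ Set.uIcc (0:ℝ) π, HasDerivAt Real.cos (-Real.sin θ) θ :=
    fun θ _ => Real.hasDerivAt_cos θ
  have hsub := intervalIntegral.integral_comp_smul_deriv hderiv
    (Continuous.continuousOn (by continuity)) (contAux (U ℝ n))
  -- hsub : ∫ θ in 0..π, (-sin θ) • g (cos θ) = ∫ y in cos 0 .. cos π, g y
  rw [Real.cos_zero, Real.cos_pi] at hsub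
  have h2 : L (U ℝ n) = ∫ θ in (0:ℝ)..π, Real.sin θ * ((U ℝ n).eval (Real.cos θ) * semicircleDensity (Real.cos θ)) := by
    rw [h1, intervalIntegral.integral_symm, ← hsub, ← intervalIntegral.integral_neg]
    congr 1
    funext θ
    simp only [Function.comp, smul_eq_mul]
    ring
  have h3 : ∀ θ ∈ Set.uIcc (0:ℝ) π,
      Real.sin θ * ((U ℝ n).eval (Real.cos θ) * semicircleDensity (Real.cos θ))
        = (2 / π) * ((Real.cos (n * θ) - Real.cos ((n + 2) * θ)) / 2) := by
    intro θ hθ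
    rw [Set.uIcc_of_le Real.pi_nonneg] at hθ
    have hs : Real.sin θ ≥ 0 := Real.sin_nonneg_of_nonneg_of_le_pi hθ.1 hθ.2
    have hsqrt : Real.sqrt (1 - Real.cos θ ^ 2) = Real.sin θ := by
      rw [show (1 : ℝ) - Real.cos θ ^ 2 = Real.sin θ ^ 2 by
        have := Real.sin_sq_add_cos_sq θ; linarith]
      exact Real.sqrt_sq hs
    have hU : (U ℝ (n : ℤ)).eval (Real.cos θ) * Real.sin θ = Real.sin ((n + 1) * θ) := by
      have := Polynomial.Chebyshev.U_real_cos θ (n : ℤ)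
      push_cast at this ⊢
      convert this using 3
    have hprod : Real.sin ((n + 1) * θ) * Real.sin θ
        = (Real.cos (n * θ) - Real.cos ((n + 2) * θ)) / 2 := by
      have e1 : (n : ℝ) * θ = (n + 1) * θ - θ := by ring
      have e2 : ((n : ℝ) + 2) * θ = (n + 1) * θ + θ := by ring
      rw [e1, e2, Real.cos_sub, Real.cos_add]
      ring
    unfold semicircleDensity
    rw [hsqrt, ← hprod, ← hU]
    ring
  rw [h2, intervalIntegral.integral_congr h3]
  rw [intervalIntegral.integral_const_mul]
  have hint : ∀ m : ℕ, IntervalIntegrable (fun θ => Real.cos (m * θ)) volume (0:ℝ) π :=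
    fun m => (Continuous.intervalIntegrable (by continuity) _ _)
  have hint2 : IntervalIntegrable (fun θ => Real.cos (((n:ℝ) + 2) * θ)) volume (0:ℝ) π := by
    have := hint (n + 2); push_cast at this; exact this
  have hc2 : (∫ θ in (0:ℝ)..π, Real.cos (((n:ℝ) + 2) * θ)) = 0 := by
    have := integral_cos_nat (n + 2)
    rw [if_neg (by omega)] at this
    push_cast at this
    exact this
  have hb : (∫ θ in (0:ℝ)..π, (Real.cos (n * θ) - Real.cos ((n + 2) * θ)) / 2)
      = ((∫ θ in (0:ℝ)..π, Real.cos (n * θ)) - ∫ θ in (0:ℝ)..π, Real.cos (((n:ℝ) + 2) * θ)) / 2 := by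
    simp_rw [div_eq_mul_inv, sub_mul]
    rw [intervalIntegral.integral_sub ((hint n).mul_const _) (hint2.mul_const _),
      intervalIntegral.integral_mul_const, intervalIntegral.integral_mul_const]
  rw [hb, integral_cos_nat n, hc2]
  rcases Nat.eq_zero_or_pos n with hn | hn
  · subst hn
    simp only [if_pos rfl, if_true]
    field_simp
    ring
  · rw [if_neg hn.ne', if_neg hn.ne']
    simp

lemma L_one : L 1 = 1 := by
  have := L_U 0
  simpa [Polynomial.Chebyshev.U_zero] using this

/-- `2 T n = U n - U (n-2)` -/
lemma two_T (n : ℤ) : (2 : ℝ[X]) * T ℝ n = U ℝ n - U ℝ (n - 2) := by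
  have h := U_sub_two ℝ n
  have h2 := T_eq_U_sub_X_mul_U ℝ n
  linear_combination 2 * h2 + h

lemma L_T2 (n : ℕ) : L (T ℝ ((n : ℤ) + 2)) = if n = 0 then -(1/2) else 0 := by
  have h : T ℝ ((n:ℤ) + 2) = C (1/2) * (U ℝ ((n:ℤ) + 2) - U ℝ n) := by
    have := two_T ((n:ℤ) + 2)
    simp only [add_sub_cancel_right] at this
    have h2 : (2 : ℝ[X]) = C 2 := (map_ofNat Polynomial.C 2).symm
    have hC : (C (1/2) : ℝ[X]) * 2 = 1 := by
      rw [h2, ← Polynomial.C_mul]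
      norm_num
    calc T ℝ ((n:ℤ) + 2) = C (1/2) * (2 * T ℝ ((n:ℤ) + 2)) := by
          rw [← mul_assoc, hC, one_mul]
      _ = C (1/2) * (U ℝ ((n:ℤ) + 2) - U ℝ n) := by rw [this]
  rw [h, L_Cmul, L_sub]
  have hU2 : L (U ℝ ((n:ℤ) + 2)) = 0 := by
    have := L_U (n + 2)
    rw [if_neg (by omega)] at this
    push_cast at this
    exact this
  rw [hU2, L_U n]
  rcases Nat.eq_zero_or_pos n with hn | hn
  · subst hn; norm_num
  · rw [if_neg hn.ne', if_neg hn.ne']; ring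

/-! ### Divided differences -/

noncomputable def dd (p : ℝ[X]) (x : ℝ) : ℝ[X] := (p - C (p.eval x)) /ₘ (X - C x)

lemma dd_spec (p : ℝ[X]) (x : ℝ) : (X - C x) * dd p x = p - C (p.eval x) := by
  have h := modByMonic_add_div (p - C (p.eval x)) (X - Polynomial.C x)
  rwa [modByMonic_X_sub_C_eq_C_eval, eval_sub, eval_C, sub_self, map_zero, zero_add] at h

lemma dd_unique {p q : ℝ[X]} {x : ℝ} (h : (X - C x) * q = p - C (p.eval x)) : dd p x = q :=
  mul_left_cancel₀ (X_sub_C_ne_zero x) (by rw [dd_spec, h])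

lemma dd_C (c x : ℝ) : dd (C c) x = 0 := dd_unique (by simp)

lemma dd_one (x : ℝ) : dd 1 x = 0 := by
  have := dd_C 1 x
  simpa using this

lemma dd_X (x : ℝ) : dd X x = 1 := dd_unique (by simp)

lemma dd_add (p q : ℝ[X]) (x : ℝ) : dd (p + q) x = dd p x + dd q x :=
  dd_unique (by
    rw [eval_add, map_add]
    linear_combination dd_spec p x + dd_spec q x)

lemma dd_sub (p q : ℝ[X]) (x : ℝ) : dd (p - q) x = dd p x - dd q x :=
  dd_unique (by
    rw [eval_sub, map_sub]
    linear_combination dd_spec p x - dd_spec q x)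

lemma dd_Cmul (c : ℝ) (p : ℝ[X]) (x : ℝ) : dd (C c * p) x = C c * dd p x :=
  dd_unique (by
    rw [eval_mul, eval_C, Polynomial.C_mul]
    linear_combination C c * dd_spec p x)

/-- Divided difference of the Chebyshev-type recurrence pattern. -/
lemma dd_rec (p q : ℝ[X]) (x : ℝ) :
    dd (2 * X * p - q) x = C 2 * p + C 2 * C x * dd p x - dd q x :=
  dd_unique (by
    have h2 : (2 : ℝ[X]) = C 2 := (map_ofNat Polynomial.C 2).symm
    rw [h2]
    simp only [eval_sub, eval_mul, eval_C, eval_X, map_sub, map_mul]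
    linear_combination (C 2 * C x) * dd_spec p x - dd_spec q x)

lemma dd_eval (p : ℝ[X]) (x y : ℝ) (hy : y ≠ x) :
    (dd p x).eval y = (p.eval x - p.eval y) / (x - y) := by
  have h := congrArg (Polynomial.eval y) (dd_spec p x)
  simp only [eval_mul, eval_sub, eval_X, eval_C] at h
  have hxy : x - y ≠ 0 := sub_ne_zero.mpr (Ne.symm hy)
  field_simp
  linear_combination -h

/-! ### `L` applied to divided differences of `T` -/

lemma L_X : L X = 0 := by
  have := L_U 1
  rw [if_neg (by norm_num)] at this
  have hU1 : U ℝ ((1:ℕ):ℤ) = C 2 * X := by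
    rw [show (((1:ℕ)):ℤ) = 1 by norm_num, Polynomial.Chebyshev.U_one]
    rw [(map_ofNat Polynomial.C 2).symm]
  rw [hU1, L_Cmul] at this
  linarith

lemma L_T1 : L (T ℝ 1) = 0 := by
  rw [Polynomial.Chebyshev.T_one]; exact L_X

lemma L_C (c : ℝ) : L (C c) = c := by
  have : (C c : ℝ[X]) = C c * 1 := (mul_one _).symm
  rw [this, L_Cmul, L_one, mul_one]

lemma L_dd_T : ∀ n : ℕ, ∀ x : ℝ,
    L (dd (T ℝ ((n : ℤ) + 1)) x) = 2 * (T ℝ n).eval x - (if n = 0 then 1 else 0) := by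
  intro n
  induction n using Nat.twoStepInduction with
  | zero =>
    intro x
    simp only [Nat.cast_zero, zero_add, Polynomial.Chebyshev.T_one, Polynomial.Chebyshev.T_zero,
      eval_one, if_pos rfl]
    rw [dd_X, L_one]
    norm_num
  | one =>
    intro x
    have hT2 : T ℝ (((1:ℕ):ℤ) + 1) = 2 * X ^ 2 - 1 := by
      rw [show (((1:ℕ):ℤ) + 1) = 2 by norm_num, Polynomial.Chebyshev.T_two]
    rw [hT2]
    have hdd : dd ((2:ℝ[X]) * X ^ 2 - 1) x = C 2 * X + C 2 * C x := by
      apply dd_unique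
      have h2 : (2:ℝ[X]) = C 2 := (map_ofNat Polynomial.C 2).symm
      rw [h2]
      simp only [eval_sub, eval_mul, eval_pow, eval_X, eval_C, eval_one, map_sub, map_mul,
        map_pow, map_one]
      ring
    rw [hdd, L_add, L_Cmul, ← Polynomial.C_mul, L_C, L_X]
    rw [show ((1:ℕ):ℤ) = 1 by norm_num, Polynomial.Chebyshev.T_one, eval_X]
    norm_num
  | more n ih ih1 =>
    intro x
    have harith : ((n + 2 : ℕ) : ℤ) + 1 = ((n:ℤ) + 1) + 2 := by push_cast; ring
    rw [harith, Polynomial.Chebyshev.T_add_two]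
    rw [show ((n:ℤ) + 1 + 1) = ((n+1 : ℕ) : ℤ) + 1 by push_cast; ring]
    rw [dd_rec, L_sub, L_add, L_Cmul, ← Polynomial.C_mul, L_Cmul]
    rw [ih1 x, ih x]
    have hLT : L (T ℝ (((n+1:ℕ):ℤ) + 1)) = if n = 0 then -(1/2) else 0 := by
      rw [show (((n+1:ℕ):ℤ) + 1) = (n:ℤ) + 2 by push_cast; ring]
      exact L_T2 n
    rw [hLT]
    have hTrec : (T ℝ ((n:ℤ) + 2)).eval x
        = 2 * x * (T ℝ ((n:ℤ)+1)).eval x - (T ℝ (n:ℤ)).eval x := by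
      rw [Polynomial.Chebyshev.T_add_two]
      simp only [eval_sub, eval_mul, eval_X, eval_ofNat]
    rw [show ((n + 2 : ℕ) : ℤ) = (n : ℤ) + 2 by push_cast; ring, hTrec]
    rw [show (((n+1:ℕ)) : ℤ) = (n : ℤ) + 1 by push_cast; ring]
    rcases Nat.eq_zero_or_pos n with hn | hn
    · subst hn
      norm_num [Polynomial.Chebyshev.T_one, Polynomial.Chebyshev.T_zero]
      ring
    · rw [if_neg hn.ne', if_neg (by omega), if_neg (by omega), if_neg (by omega)]
      ring

/-- `L (derivative (T (n+1))) = (n+1) δ_{n,0}` -/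
lemma L_deriv_T (n : ℕ) :
    L (derivative (T ℝ ((n:ℤ) + 1))) = if n = 0 then 1 else 0 := by
  rw [Polynomial.Chebyshev.T_derivative_eq_U]
  simp only [add_sub_cancel_right]
  have hcast : (((n:ℤ) + 1 : ℤ) : ℝ[X]) = C ((n : ℝ) + 1) := by
    push_cast
    simp [C_eq_natCast]
  rw [hcast, L_Cmul, L_U n]
  rcases Nat.eq_zero_or_pos n with hn | hn
  · subst hn; norm_num
  · simp [hn.ne']

/-! ### The main induction -/

lemma L_dd_P : ∀ n : ℕ, ∀ x : ℝ,
    L (dd (derivative (T ℝ ((n:ℤ) + 1))) x)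
      = 2 * x * (derivative (T ℝ ((n:ℤ) + 1))).eval x
        - 2 * ((n:ℝ) + 1) * (T ℝ ((n:ℤ)+1)).eval x := by
  intro n
  induction n using Nat.twoStepInduction with
  | zero =>
    intro x
    simp only [Nat.cast_zero, zero_add]
    rw [Polynomial.Chebyshev.T_one]
    simp only [derivative_X]
    rw [dd_one]
    have hL0 : L 0 = 0 := by
      have := L_Cmul 0 0
      simpa using this
    rw [hL0]
    simp only [eval_one, eval_X]
    ring
  | one =>
    intro x
    rw [show ((1:ℕ) : ℤ) + 1 = 2 by norm_num, Polynomial.Chebyshev.T_two]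
    have hD : derivative ((2:ℝ[X]) * X ^ 2 - 1) = C 4 * X := by
      have h2 : (2:ℝ[X]) = C 2 := (map_ofNat Polynomial.C 2).symm
      rw [derivative_sub, derivative_one, derivative_mul]
      simp only [derivative_X_pow, derivative_ofNat, zero_mul, zero_add, sub_zero]
      rw [h2]
      push_cast
      norm_num
      rw [← mul_assoc, ← Polynomial.C_mul]
      norm_num
    rw [hD, dd_Cmul, dd_X]
    have hL4 : L (C 4 * 1) = 4 := by rw [L_Cmul, L_one]; norm_num
    rw [hL4]
    simp only [eval_sub, eval_mul, eval_pow, eval_X, eval_C, eval_one, eval_ofNat,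
      Nat.cast_one]
    ring
  | more n ih ih1 =>
    intro x
    have harith : ((n + 2 : ℕ) : ℤ) + 1 = ((n:ℤ) + 1) + 2 := by push_cast; ring
    rw [harith, Polynomial.Chebyshev.T_add_two]
    have h2 : (2:ℝ[X]) = C 2 := (map_ofNat Polynomial.C 2).symm
    have hderiv : derivative ((2:ℝ[X]) * X * T ℝ ((n:ℤ) + 1 + 1) - T ℝ ((n:ℤ) + 1))
        = C 2 * T ℝ ((n:ℤ) + 1 + 1)
          + (2 * X * derivative (T ℝ ((n:ℤ) + 1 + 1)) - derivative (T ℝ ((n:ℤ) + 1))) := by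
      rw [derivative_sub, derivative_mul, derivative_mul]
      simp only [derivative_X, derivative_ofNat, zero_mul, zero_add, mul_one]
      rw [h2]
      ring
    rw [hderiv, dd_add, dd_Cmul, dd_rec, L_add, L_Cmul, L_sub, L_add, L_Cmul, ← Polynomial.C_mul, L_Cmul]
    rw [show ((n:ℤ) + 1 + 1) = ((n + 1 : ℕ) : ℤ) + 1 by push_cast; ring]
    rw [L_dd_T (n+1) x, ih1 x, ih x, L_deriv_T (n+1)]
    simp only [eval_add, eval_sub, eval_mul, eval_X, eval_C, eval_ofNat]
    push_cast
    ring

end ChebAux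

/-- for every `k ≥ 1` and every real `x`,
`∫_{-1}^{1} (T_k'(x) - T_k'(y))/(x - y) μ_sc(dy) = 2x T_k'(x) - 2k T_k(x)`,
the integrand being interpreted as `T_k''(x)` at `y = x`. -/
theorem chebyshev_eigen_identity (k : ℕ) (hk : 1 ≤ k) (x : ℝ) :
    (∫ y in Set.Ioo (-1 : ℝ) 1,
        (if y = x then chebT'' k x else (chebT' k x - chebT' k y) / (x - y)) *
          semicircleDensity y)
      = 2 * x * chebT' k x - 2 * k * chebT k x := by
  obtain ⟨n, rfl⟩ : ∃ n : ℕ, k = n + 1 := ⟨k - 1, by omega⟩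
  simp only [Nat.cast_add, Nat.cast_one]
  have hae : (fun y => (if y = x then chebT'' ((n:ℤ)+1) x
        else (chebT' ((n:ℤ)+1) x - chebT' ((n:ℤ)+1) y) / (x - y)) * semicircleDensity y)
      =ᵐ[volume.restrict (Set.Ioo (-1 : ℝ) 1)]
      (fun y => (ChebAux.dd (Polynomial.derivative (Polynomial.Chebyshev.T ℝ ((n:ℤ)+1))) x).eval y
        * semicircleDensity y) := by
    have hx : ∀ᵐ y ∂(volume.restrict (Set.Ioo (-1 : ℝ) 1)), y ≠ x := by
      apply MeasureTheory.ae_restrict_of_ae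
      rw [MeasureTheory.ae_iff]
      have hs : {y : ℝ | ¬ y ≠ x} = {x} := by ext y; simp
      rw [hs]
      exact Real.volume_singleton
    filter_upwards [hx] with y hy
    rw [if_neg hy, ChebAux.dd_eval _ x y hy]
    rfl
  rw [MeasureTheory.integral_congr_ae hae]
  have h := ChebAux.L_dd_P n x
  unfold ChebAux.L at h
  rw [h]
  unfold chebT' chebT
  ring
end

section
/- For every k ≥ 1, the double integral over (-1,1)² of (T_k'(x) - T_k'(y))/(x - y) against the product of semicircle measures equals -4k · ∫_{-1}^{1} T_k(x) μ_sc(dx); equivalently it equals 2k·δ_{k,2}. -/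
open MeasureTheory Real Polynomial

section Aux

open intervalIntegral

noncomputable def uF (n : ℤ) (x : ℝ) : ℝ := (Polynomial.Chebyshev.U ℝ n).eval x

lemma uF_cont (n : ℤ) : Continuous (uF n) := (Polynomial.Chebyshev.U ℝ n).continuous
lemma uF_zero (x : ℝ) : uF 0 x = 1 := by simp [uF, Polynomial.Chebyshev.U_zero]
lemma uF_neg_one (x : ℝ) : uF (-1) x = 0 := by simp [uF, Polynomial.Chebyshev.U_neg_one]
lemma uF_one (x : ℝ) : uF 1 x = 2 * x := by simp [uF, Polynomial.Chebyshev.U_one]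
lemma uF_add_two (n : ℤ) (x : ℝ) : uF (n+2) x = 2*x*uF (n+1) x - uF n x := by
  simp [uF, Polynomial.Chebyshev.U_add_two]

lemma two_T_eq (n : ℤ) : 2 * Polynomial.Chebyshev.T ℝ n
    = Polynomial.Chebyshev.U ℝ n - Polynomial.Chebyshev.U ℝ (n-2) := by
  linear_combination 2 * Polynomial.Chebyshev.T_eq_U_sub_X_mul_U ℝ n
    + Polynomial.Chebyshev.U_sub_two ℝ n

noncomputable def sF : ℕ → ℝ → ℝ → ℝ
  | 0, _, _ => 0
  | 1, _, _ => 1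
  | (n+2), x, y => uF (n+1) y + 2*x*sF (n+1) x y - sF n x y

lemma sF_zero' (x y : ℝ) : sF 0 x y = 0 := rfl
lemma sF_one' (x y : ℝ) : sF 1 x y = 1 := rfl
lemma sF_add_two' (n : ℕ) (x y : ℝ) :
    sF (n+2) x y = uF (n+1) y + 2*x*sF (n+1) x y - sF n x y := rfl

lemma sF_cont (n : ℕ) (x : ℝ) : Continuous (sF n x) := by
  induction n using Nat.twoStepInduction with
  | zero => exact continuous_const
  | one => exact continuous_const
  | more n ih1 ih2 =>
    exact ((uF_cont _).add (continuous_const.mul ih2)).sub ih1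

lemma key_id (n : ℕ) (x y : ℝ) : uF n x - uF n y = 2*(x-y)*sF n x y := by
  induction n using Nat.twoStepInduction with
  | zero => simp [sF, uF_zero]
  | one => simp [sF, uF_one]; ring
  | more n ih1 ih2 =>
    have hx := uF_add_two n x
    have hy := uF_add_two n y
    push_cast
    push_cast at ih1 ih2
    show uF (n+2) x - uF (n+2) y = 2*(x-y)*(uF (n+1) y + 2*x*sF (n+1) x y - sF n x y)
    rw [hx, hy]
    linear_combination 2*x*ih2 - ih1

lemma wCont : Continuous semicircleDensity := by
  unfold semicircleDensity
  exact continuous_const.mul (Real.continuous_sqrt.comp (by continuity))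

lemma intw {f : ℝ → ℝ} (hf : Continuous f) :
    IntegrableOn (fun y => f y * semicircleDensity y) (Set.Ioo (-1:ℝ) 1) :=
  ((hf.mul wCont).integrableOn_Icc).mono_set Set.Ioo_subset_Icc_self

lemma intC (c : ℕ) : (∫ θ in (0:ℝ)..π, Real.cos (c*θ)) = if c = 0 then π else 0 := by
  rcases Nat.eq_zero_or_pos c with h | h
  · simp [h]
  · have hc : (c:ℝ) ≠ 0 := by positivity
    rw [if_neg (by omega), integral_comp_mul_left Real.cos hc]
    simp [integral_cos, Real.sin_nat_mul_pi]

lemma I_val (m : ℕ) :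
    (∫ y in Set.Ioo (-1:ℝ) 1, uF m y * semicircleDensity y) = if m = 0 then 1 else 0 := by
  have h0 : (∫ y in Set.Ioo (-1:ℝ) 1, uF m y * semicircleDensity y)
      = ∫ y in (-1:ℝ)..1, uF m y * semicircleDensity y := by
    rw [integral_of_le (by norm_num : (-1:ℝ) ≤ 1)]
    exact setIntegral_congr_set Ioo_ae_eq_Ioc
  have hsub : (∫ y in (-1:ℝ)..1, uF m y * semicircleDensity y)
      = ∫ θ in (0:ℝ)..π, Real.sin θ * (uF m (Real.cos θ) * semicircleDensity (Real.cos θ)) := by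
    have hder : ∀ θ ∈ Set.uIcc (π:ℝ) 0, HasDerivAt Real.cos (-Real.sin θ) θ :=
      fun θ _ => Real.hasDerivAt_cos θ
    have h := integral_comp_smul_deriv hder
      (Real.continuous_sin.neg.continuousOn)
      ((uF_cont m).mul wCont)
    simp only [Real.cos_zero, Real.cos_pi, Function.comp, smul_eq_mul, Pi.mul_apply] at h
    rw [integral_symm 0 π] at h
    have h2 : (∫ θ in (0:ℝ)..π, -Real.sin θ * (uF m (Real.cos θ) * semicircleDensity (Real.cos θ)))
        = -∫ θ in (0:ℝ)..π, Real.sin θ * (uF m (Real.cos θ) * semicircleDensity (Real.cos θ)) := by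
      rw [← intervalIntegral.integral_neg]; congr 1; ext θ; ring
    rw [h2] at h
    linarith [h]
  have hcongr : ∀ θ ∈ Set.uIcc (0:ℝ) π,
      Real.sin θ * (uF m (Real.cos θ) * semicircleDensity (Real.cos θ))
      = (1/π) * (Real.cos ((m:ℝ)*θ) - Real.cos (((m:ℝ)+2)*θ)) := by
    intro θ hθ
    rw [Set.uIcc_of_le Real.pi_pos.le] at hθ
    have hs : Real.sqrt (1 - Real.cos θ ^ 2) = Real.sin θ :=
      (Real.sin_eq_sqrt_one_sub_cos_sq hθ.1 hθ.2).symm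
    have hU : uF m (Real.cos θ) * Real.sin θ = Real.sin (((m:ℝ)+1)*θ) := by
      have h5 := Polynomial.Chebyshev.U_real_cos θ (m:ℤ)
      unfold uF; push_cast at h5 ⊢; linarith [h5]
    have h4 : Real.cos ((m:ℝ)*θ) - Real.cos (((m:ℝ)+2)*θ)
        = 2 * (Real.sin (((m:ℝ)+1)*θ) * Real.sin θ) := by
      have e1 := Real.cos_sub (((m:ℝ)+1)*θ) θ
      have e2 := Real.cos_add (((m:ℝ)+1)*θ) θ
      have a1 : ((m:ℝ)+1)*θ - θ = (m:ℝ)*θ := by ring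
      have a2 : ((m:ℝ)+1)*θ + θ = ((m:ℝ)+2)*θ := by ring
      rw [a1] at e1; rw [a2] at e2; linarith [e1, e2]
    unfold semicircleDensity
    rw [hs, h4, ← hU]
    field_simp
  rw [h0, hsub, integral_congr hcongr, intervalIntegral.integral_const_mul,
    integral_sub (Continuous.intervalIntegrable (by fun_prop) _ _)
      (Continuous.intervalIntegrable (by fun_prop) _ _)]
  have c1 := intC m
  have c2 := intC (m+2)
  push_cast at c1 c2
  rw [c1, c2]
  rcases Nat.eq_zero_or_pos m with h | h
  · simp [h, Real.pi_ne_zero]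
  · rw [if_neg (by omega), if_neg (by omega)]; ring

lemma phi_val (n : ℕ) (x : ℝ) :
    (∫ y in Set.Ioo (-1:ℝ) 1, sF (n+1) x y * semicircleDensity y) = uF n x := by
  induction n using Nat.twoStepInduction with
  | zero =>
    have h := I_val 0
    simp only [Nat.cast_zero, uF_zero, one_mul, if_pos rfl] at h
    simpa [sF, uF_zero] using h
  | one =>
    have h1 := I_val 1
    have h0 := I_val 0
    rw [if_neg one_ne_zero] at h1
    rw [if_pos rfl] at h0
    simp only [Nat.cast_zero, uF_zero, one_mul] at h0
    have hrw : ∀ y : ℝ, sF 2 x y * semicircleDensity y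
        = uF 1 y * semicircleDensity y + (2*x) * semicircleDensity y := by
      intro y
      have h2 : sF 2 x y = uF 1 y + 2*x*sF 1 x y - sF 0 x y := sF_add_two' 0 x y
      rw [h2, sF_one', sF_zero']
      ring
    simp only [hrw]
    have hint2 : IntegrableOn (fun y => (2*x) * semicircleDensity y) (Set.Ioo (-1:ℝ) 1) :=
      intw continuous_const
    rw [MeasureTheory.integral_add (intw (uF_cont 1)) hint2]
    rw [MeasureTheory.integral_const_mul]
    have h0' : (∫ y in Set.Ioo (-1:ℝ) 1, semicircleDensity y) = 1 := by
      simpa using h0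
    push_cast at h1 ⊢
    rw [h1, h0', uF_one]
    ring
  | more n ih1 ih2 =>
    have hrw : ∀ y : ℝ, sF (n+3) x y * semicircleDensity y
        = uF (n+2) y * semicircleDensity y
          + (2*x) * (sF (n+2) x y * semicircleDensity y)
          - sF (n+1) x y * semicircleDensity y := by
      intro y
      have h3 : sF (n+3) x y = uF (n+2) y + 2*x*sF (n+2) x y - sF (n+1) x y :=
        sF_add_two' (n+1) x y
      rw [h3]
      ring
    have hI := I_val (n+2)
    rw [if_neg (by omega)] at hI
    simp only [hrw]
    have hA : IntegrableOn (fun y => uF ((n:ℤ)+2) y * semicircleDensity y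
        + 2*x*(sF (n+2) x y * semicircleDensity y)) (Set.Ioo (-1:ℝ) 1) :=
      (intw (uF_cont _)).add ((intw (sF_cont (n+2) x)).const_mul _)
    rw [MeasureTheory.integral_sub hA (intw (sF_cont (n+1) x)),
      MeasureTheory.integral_add (intw (uF_cont _)) ((intw (sF_cont (n+2) x)).const_mul _),
      MeasureTheory.integral_const_mul]
    have ih2' : (∫ y in Set.Ioo (-1:ℝ) 1, sF (n+2) x y * semicircleDensity y)
        = uF ((n:ℤ)+1) x := by exact_mod_cast ih2
    push_cast at hI ⊢
    rw [hI, ih2', ih1, uF_add_two]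
    ring

lemma J_val (k : ℕ) (hk : 1 ≤ k) :
    (∫ x in Set.Ioo (-1:ℝ) 1, chebT k x * semicircleDensity x)
      = if k = 2 then -(1/2 : ℝ) else 0 := by
  have hT : ∀ x : ℝ, chebT k x * semicircleDensity x
      = (1/2) * (uF k x * semicircleDensity x)
        - (1/2) * (uF ((k:ℤ)-2) x * semicircleDensity x) := by
    intro x
    have h := congrArg (Polynomial.eval x) (two_T_eq (k:ℤ))
    simp only [Polynomial.eval_mul, Polynomial.eval_ofNat, Polynomial.eval_sub] at h
    unfold chebT uF
    linear_combination (semicircleDensity x / 2) * h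
  simp only [hT]
  rw [MeasureTheory.integral_sub ((intw (uF_cont _)).const_mul _)
      ((intw (uF_cont _)).const_mul _),
    MeasureTheory.integral_const_mul, MeasureTheory.integral_const_mul]
  rcases eq_or_lt_of_le hk with h1 | h2
  · -- k = 1
    have hk1 : k = 1 := h1.symm
    subst hk1
    have e1 : ((1:ℕ):ℤ) - 2 = -1 := by norm_num
    rw [e1]
    have h2 : (∫ x in Set.Ioo (-1:ℝ) 1, uF (-1) x * semicircleDensity x) = 0 := by
      simp [uF_neg_one]
    have h3 := I_val 1
    rw [if_neg one_ne_zero] at h3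
    rw [h2]
    push_cast
    push_cast at h3
    rw [h3]
    norm_num
  · -- k ≥ 2
    obtain ⟨m, rfl⟩ : ∃ m, k = m + 2 := ⟨k - 2, by omega⟩
    have e1 : (((m+2:ℕ)):ℤ) - 2 = (m:ℤ) := by push_cast; ring
    rw [e1]
    have h3 := I_val (m+2)
    rw [if_neg (by omega)] at h3
    have h4 := I_val m
    push_cast at h3
    push_cast
    rw [h3, h4]
    rcases Nat.eq_zero_or_pos m with h | h
    · subst h; norm_num
    · rw [if_neg (by omega), if_neg (by omega)]; ring

lemma main_val (k : ℕ) (hk : 1 ≤ k) :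
    (∫ x in Set.Ioo (-1 : ℝ) 1,
        (∫ y in Set.Ioo (-1 : ℝ) 1,
            (if y = x then chebT'' k x else (chebT' k x - chebT' k y) / (x - y)) *
              semicircleDensity y) * semicircleDensity x)
      = 2 * k * (if k = 2 then (1 : ℝ) else 0) := by
  have hinner : ∀ x : ℝ,
      (∫ y in Set.Ioo (-1 : ℝ) 1,
          (if y = x then chebT'' k x else (chebT' k x - chebT' k y) / (x - y)) *
            semicircleDensity y)
      = (2*(k:ℝ)) * ∫ y in Set.Ioo (-1:ℝ) 1, sF (k-1) x y * semicircleDensity y := by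
    intro x
    have hx : ∀ᵐ (y : ℝ), y ≠ x := by
      rw [MeasureTheory.ae_iff]
      simp only [ne_eq, not_not, Set.setOf_eq_eq_singleton]
      exact measure_singleton x
    have hae : (fun y => (if y = x then chebT'' k x else (chebT' k x - chebT' k y) / (x - y)) *
          semicircleDensity y)
        =ᵐ[volume.restrict (Set.Ioo (-1:ℝ) 1)]
        (fun y => (2*(k:ℝ)) * (sF (k-1) x y * semicircleDensity y)) := by
      filter_upwards [ae_restrict_of_ae hx] with y hy
      rw [if_neg hy]
      have hTd : ∀ z : ℝ, chebT' k z = (k:ℝ) * uF ((k:ℤ)-1) z := by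
        intro z
        unfold chebT' uF
        rw [Polynomial.Chebyshev.T_derivative_eq_U]
        simp
      have hk1 : ((k:ℤ)-1) = ((k-1:ℕ):ℤ) := by omega
      have hxy : x - y ≠ 0 := sub_ne_zero.mpr (fun h => hy h.symm)
      rw [hTd, hTd, hk1]
      have hkey := key_id (k-1) x y
      have hnum : (k:ℝ) * uF ((k-1:ℕ):ℤ) x - (k:ℝ) * uF ((k-1:ℕ):ℤ) y
          = (x - y) * (2*(k:ℝ) * sF (k-1) x y) := by
        linear_combination (k:ℝ) * hkey
      rw [hnum, mul_comm (x - y), mul_div_assoc, div_self hxy, mul_one]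
      ring
    rw [MeasureTheory.integral_congr_ae hae, MeasureTheory.integral_const_mul]
  simp only [hinner]
  rcases eq_or_lt_of_le hk with h1 | h2
  · -- k = 1
    have hk1 : k = 1 := h1.symm
    subst hk1
    simp [show (1-1 : ℕ) = 0 from rfl, sF_zero']
  · -- k ≥ 2
    obtain ⟨m, rfl⟩ : ∃ m, k = m + 2 := ⟨k - 2, by omega⟩
    have e1 : m + 2 - 1 = m + 1 := by omega
    simp only [e1, phi_val]
    have hout : ∀ x : ℝ, (2 * ((m+2:ℕ):ℝ) * uF (m:ℤ) x) * semicircleDensity x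
        = (2 * ((m+2:ℕ):ℝ)) * (uF (m:ℤ) x * semicircleDensity x) := fun x => by ring
    simp only [hout]
    rw [MeasureTheory.integral_const_mul, I_val m]
    rcases Nat.eq_zero_or_pos m with h | h
    · subst h; norm_num
    · rw [if_neg (by omega), if_neg (by omega)]

end Aux

/-- for every `k ≥ 1`,
`∬_{(-1,1)²} (T_k'(x) - T_k'(y))/(x - y) μ_sc(dx)μ_sc(dy) = -4k ∫ T_k dμ_sc = 2k δ_{k,2}`,
the integrand being interpreted as `T_k''(x)` on the diagonal. -/
theorem chebyshev_double_integral (k : ℕ) (hk : 1 ≤ k) :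
    (∫ x in Set.Ioo (-1 : ℝ) 1,
        (∫ y in Set.Ioo (-1 : ℝ) 1,
            (if y = x then chebT'' k x else (chebT' k x - chebT' k y) / (x - y)) *
              semicircleDensity y) * semicircleDensity x)
      = -4 * k * ∫ x in Set.Ioo (-1 : ℝ) 1, chebT k x * semicircleDensity x ∧
    (∫ x in Set.Ioo (-1 : ℝ) 1,
        (∫ y in Set.Ioo (-1 : ℝ) 1,
            (if y = x then chebT'' k x else (chebT' k x - chebT' k y) / (x - y)) *
              semicircleDensity y) * semicircleDensity x)
      = 2 * k * (if k = 2 then (1 : ℝ) else 0) := by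
  have hmain := main_val k hk
  refine ⟨?_, hmain⟩
  rw [hmain, J_val k hk]
  rcases eq_or_ne k 2 with h | h
  · subst h; norm_num
  · rw [if_neg h, if_neg h]; ring
end

section
/- For any function f of class C⁴ on ℝ and any real numbers s, t, u, v, the following identity holds: (f'(s)-f'(t))/(s-t) + (f'(u)-f'(v))/(u-v) - (f'(s)-f'(v))/(s-v) - (f'(u)-f'(t))/(u-t) = (s-u)(t-v) ∫_{[0,1]³} f⁗(ac(s-u) + (1-a)b(t-v) + au + (1-a)v) · a(1-a) da db dc, where each difference quotient is interpreted as f'' when the two arguments coincide. -/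
open MeasureTheory Real

lemma integOn {g : ℝ → ℝ} (hg : Continuous g) : IntegrableOn g (Set.Ioo (0:ℝ) 1) :=
  (hg.integrableOn_Icc).mono_set Set.Ioo_subset_Icc_self

lemma key2 (g : ℝ → ℝ) (hg : Differentiable ℝ g) (hg' : Continuous (deriv g))
    (p q x y : ℝ) :
    g (p*x + q) - g (p*y + q)
      = (x - y) * ∫ c in Set.Ioo (0:ℝ) 1, p * deriv g (p*(y + c*(x-y)) + q) := by
  set F : ℝ → ℝ := fun c => g (p*(y + c*(x-y)) + q) with hF
  have hder : ∀ c : ℝ, HasDerivAt F ((x-y) * (p * deriv g (p*(y + c*(x-y)) + q))) c := by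
    intro c
    have haff : HasDerivAt (fun c : ℝ => p*(y + c*(x-y)) + q) (p*(x-y)) c := by
      simpa using ((((hasDerivAt_id c).mul_const (x-y)).const_add y).const_mul p).add_const q
    have := ((hg _).hasDerivAt).comp c haff
    simpa [F, Function.comp_def, mul_comm, mul_left_comm, mul_assoc] using this
  have hcont : Continuous fun c : ℝ => (x-y) * (p * deriv g (p*(y + c*(x-y)) + q)) := by
    fun_prop
  have hint : ∫ c in (0:ℝ)..1, (x-y) * (p * deriv g (p*(y + c*(x-y)) + q)) = F 1 - F 0 :=
    intervalIntegral.integral_eq_sub_of_hasDerivAt (fun c _ => hder c)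
      (hcont.intervalIntegrable _ _)
  have h01 : F 1 - F 0 = g (p*x + q) - g (p*y + q) := by
    simp only [F]; ring_nf
  rw [← h01, ← hint, intervalIntegral.integral_of_le zero_le_one,
    MeasureTheory.integral_Ioc_eq_integral_Ioo, MeasureTheory.integral_const_mul]

/-- Difference quotient of `f'`, interpreted as `f''` on the diagonal. -/
noncomputable def diffQuot (f : ℝ → ℝ) (x y : ℝ) : ℝ :=
  if x = y then deriv (deriv f) x else (deriv f x - deriv f y) / (x - y)

lemma step1 (f : ℝ → ℝ) (hf : ContDiff ℝ 4 f) (x y : ℝ) :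
    diffQuot f x y = ∫ a in Set.Ioo (0:ℝ) 1, iteratedDeriv 2 f (y + a*(x-y)) := by
  have hd : deriv (deriv f) = iteratedDeriv 2 f := by
    conv_rhs => rw [show (2:ℕ) = 1+1 from rfl, iteratedDeriv_succ, iteratedDeriv_one]
  by_cases h : x = y
  · subst h
    simp [diffQuot, hd, Real.volume_Ioo]
  · have h1 : Differentiable ℝ (deriv f) := by
      have := hf.differentiable_iteratedDeriv 1 (by norm_num)
      rwa [iteratedDeriv_one] at this
    have h2 : Continuous (deriv (deriv f)) := by
      rw [hd]; exact hf.continuous_iteratedDeriv 2 (by norm_num)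
    have hk := key2 (deriv f) h1 h2 1 0 x y
    simp only [one_mul, add_zero, hd] at hk
    rw [diffQuot, if_neg h, hk, mul_comm, mul_div_assoc, div_self (sub_ne_zero.mpr h), mul_one]

lemma step_a (f : ℝ → ℝ) (hf : ContDiff ℝ 4 f) (s t u v a : ℝ) :
    iteratedDeriv 2 f (a*s+(1-a)*t) + iteratedDeriv 2 f (a*u+(1-a)*v)
      - iteratedDeriv 2 f (a*s+(1-a)*v) - iteratedDeriv 2 f (a*u+(1-a)*t)
    = (s-u)*(t-v) * ∫ b in Set.Ioo (0:ℝ) 1, ∫ c in Set.Ioo (0:ℝ) 1,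
        iteratedDeriv 4 f (a*c*(s-u) + (1-a)*b*(t-v) + a*u + (1-a)*v) * (a*(1-a)) := by
  have hd2 : Differentiable ℝ (iteratedDeriv 2 f) :=
    hf.differentiable_iteratedDeriv 2 (by norm_num)
  have hd3 : Differentiable ℝ (iteratedDeriv 3 f) :=
    hf.differentiable_iteratedDeriv 3 (by norm_num)
  have hD3 : deriv (iteratedDeriv 2 f) = iteratedDeriv 3 f := (iteratedDeriv_succ).symm
  have hD4 : deriv (iteratedDeriv 3 f) = iteratedDeriv 4 f := (iteratedDeriv_succ).symm
  have hc3 : Continuous (iteratedDeriv 3 f) := hf.continuous_iteratedDeriv 3 (by norm_num)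
  have hc4 : Continuous (iteratedDeriv 4 f) := hf.continuous_iteratedDeriv 4 (by norm_num)
  have hc3' : Continuous (deriv (iteratedDeriv 2 f)) := by rw [hD3]; exact hc3
  have hc4' : Continuous (deriv (iteratedDeriv 3 f)) := by rw [hD4]; exact hc4
  have h1 := key2 (iteratedDeriv 2 f) hd2 hc3' (1-a) (a*s) t v
  have h2 := key2 (iteratedDeriv 2 f) hd2 hc3' (1-a) (a*u) t v
  simp only [hD3] at h1 h2
  have e1 : a*s+(1-a)*t = (1-a)*t + a*s := by ring
  have e2 : a*u+(1-a)*v = (1-a)*v + a*u := by ring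
  have e3 : a*s+(1-a)*v = (1-a)*v + a*s := by ring
  have e4 : a*u+(1-a)*t = (1-a)*t + a*u := by ring
  rw [e1, e2, e3, e4,
    show iteratedDeriv 2 f ((1-a)*t + a*s) + iteratedDeriv 2 f ((1-a)*v + a*u)
      - iteratedDeriv 2 f ((1-a)*v + a*s) - iteratedDeriv 2 f ((1-a)*t + a*u)
      = (iteratedDeriv 2 f ((1-a)*t + a*s) - iteratedDeriv 2 f ((1-a)*v + a*s))
        - (iteratedDeriv 2 f ((1-a)*t + a*u) - iteratedDeriv 2 f ((1-a)*v + a*u)) from by ring,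
    h1, h2, ← mul_sub, ← MeasureTheory.integral_sub
      (integOn (by fun_prop)) (integOn (by fun_prop))]
  have hb : ∀ b : ℝ,
      (1-a) * iteratedDeriv 3 f ((1-a)*(v + b*(t-v)) + a*s)
        - (1-a) * iteratedDeriv 3 f ((1-a)*(v + b*(t-v)) + a*u)
      = (s-u) * ∫ c in Set.Ioo (0:ℝ) 1,
          iteratedDeriv 4 f (a*c*(s-u) + (1-a)*b*(t-v) + a*u + (1-a)*v) * (a*(1-a)) := by
    intro b
    have h3 := key2 (iteratedDeriv 3 f) hd3 hc4' a ((1-a)*(v + b*(t-v))) s u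
    simp only [hD4] at h3
    rw [show (1-a)*(v + b*(t-v)) + a*s = a*s + (1-a)*(v + b*(t-v)) from by ring,
      show (1-a)*(v + b*(t-v)) + a*u = a*u + (1-a)*(v + b*(t-v)) from by ring,
      ← mul_sub, h3, mul_left_comm]
    congr 1
    rw [← MeasureTheory.integral_const_mul]
    refine setIntegral_congr_fun measurableSet_Ioo fun c _ => ?_
    rw [show a*(u + c*(s-u)) + (1-a)*(v + b*(t-v))
        = a*c*(s-u) + (1-a)*b*(t-v) + a*u + (1-a)*v from by ring]
    ring
  rw [setIntegral_congr_fun measurableSet_Ioo (fun b _ => hb b),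
    MeasureTheory.integral_const_mul]
  ring


/-- the four-point difference-quotient identity for a `C⁴` function. -/
theorem fourth_derivative_interpolation (f : ℝ → ℝ) (hf : ContDiff ℝ 4 f) (s t u v : ℝ) :
    diffQuot f s t + diffQuot f u v - diffQuot f s v - diffQuot f u t
      = (s - u) * (t - v) *
        ∫ a in Set.Ioo (0 : ℝ) 1, ∫ b in Set.Ioo (0 : ℝ) 1, ∫ c in Set.Ioo (0 : ℝ) 1,
          iteratedDeriv 4 f (a * c * (s - u) + (1 - a) * b * (t - v) + a * u + (1 - a) * v) *
            (a * (1 - a)) := by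
  have hc2 : Continuous (iteratedDeriv 2 f) := hf.continuous_iteratedDeriv 2 (by norm_num)
  have r : ∀ x y : ℝ, diffQuot f x y
      = ∫ a in Set.Ioo (0:ℝ) 1, iteratedDeriv 2 f (a*x + (1-a)*y) := by
    intro x y
    rw [step1 f hf x y]
    exact setIntegral_congr_fun measurableSet_Ioo fun a _ => by
      rw [show y + a*(x-y) = a*x + (1-a)*y from by ring]
  rw [r s t, r u v, r s v, r u t]
  have hA : IntegrableOn (fun a : ℝ => iteratedDeriv 2 f (a*s + (1-a)*t))
      (Set.Ioo (0:ℝ) 1) := integOn (by fun_prop)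
  have hB : IntegrableOn (fun a : ℝ => iteratedDeriv 2 f (a*u + (1-a)*v))
      (Set.Ioo (0:ℝ) 1) := integOn (by fun_prop)
  have hC : IntegrableOn (fun a : ℝ => iteratedDeriv 2 f (a*s + (1-a)*v))
      (Set.Ioo (0:ℝ) 1) := integOn (by fun_prop)
  have hD : IntegrableOn (fun a : ℝ => iteratedDeriv 2 f (a*u + (1-a)*t))
      (Set.Ioo (0:ℝ) 1) := integOn (by fun_prop)
  have c1 : ∫ a in Set.Ioo (0:ℝ) 1,
      (iteratedDeriv 2 f (a*s + (1-a)*t) + iteratedDeriv 2 f (a*u + (1-a)*v)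
        - iteratedDeriv 2 f (a*s + (1-a)*v) - iteratedDeriv 2 f (a*u + (1-a)*t))
      = (∫ a in Set.Ioo (0:ℝ) 1, iteratedDeriv 2 f (a*s + (1-a)*t))
        + (∫ a in Set.Ioo (0:ℝ) 1, iteratedDeriv 2 f (a*u + (1-a)*v))
        - (∫ a in Set.Ioo (0:ℝ) 1, iteratedDeriv 2 f (a*s + (1-a)*v))
        - (∫ a in Set.Ioo (0:ℝ) 1, iteratedDeriv 2 f (a*u + (1-a)*t)) := by
    have hAB : IntegrableOn (fun a : ℝ => iteratedDeriv 2 f (a*s + (1-a)*t)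
        + iteratedDeriv 2 f (a*u + (1-a)*v)) (Set.Ioo (0:ℝ) 1) := hA.add hB
    have hABC : IntegrableOn (fun a : ℝ => iteratedDeriv 2 f (a*s + (1-a)*t)
        + iteratedDeriv 2 f (a*u + (1-a)*v) - iteratedDeriv 2 f (a*s + (1-a)*v))
        (Set.Ioo (0:ℝ) 1) := hAB.sub hC
    rw [MeasureTheory.integral_sub hABC hD, MeasureTheory.integral_sub hAB hC,
      MeasureTheory.integral_add hA hB]
  rw [← c1,
    setIntegral_congr_fun measurableSet_Ioo (fun a _ => step_a f hf s t u v a),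
    MeasureTheory.integral_const_mul]
end

section
/- Let φ ∈ C^{k,1}([-1,1]) (Lipschitz k-th derivative) and F_k(x,t) = (φ(t) - Λ_k[φ](x,t))/(t-x)^{k+1}. Then the function x ↦ ∫_{-1}^{1} F_k(x,t) ϱ(dt) is α-Hölder continuous on [-1,1] for every α ≤ 1/2. -/
open MeasureTheory Real Set

/-- Density of the arcsine law on `(-1,1)`. -/
noncomputable def arcsineDensity (x : ℝ) : ℝ := 1 / (Real.pi * Real.sqrt (1 - x ^ 2))

/-- The degree-`k` Taylor polynomial of `φ` at `x`, evaluated at `t`. -/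
noncomputable def taylorPoly (φ : ℝ → ℝ) (k : ℕ) (x t : ℝ) : ℝ :=
  ∑ i ∈ Finset.range (k + 1), iteratedDeriv i φ x * (t - x) ^ i / (Nat.factorial i)

/-- `F_k(x,t) = (φ(t) - Λ_k[φ](x,t))/(t-x)^{k+1}`. -/
noncomputable def taylorRemainderQuot (φ : ℝ → ℝ) (k : ℕ) (x t : ℝ) : ℝ :=
  (φ t - taylorPoly φ k x t) / (t - x) ^ (k + 1)

lemma taylorPoly_self (φ : ℝ → ℝ) (k : ℕ) (t : ℝ) : taylorPoly φ k t t = φ t := by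
  unfold taylorPoly
  rw [Finset.sum_eq_single 0]
  · simp
  · intro i _ hi
    rw [sub_self, zero_pow hi]
    simp
  · simp

lemma hasDerivAt_taylorA (φ : ℝ → ℝ) (k : ℕ)
    (hd : ∀ i < k, Differentiable ℝ (iteratedDeriv i φ)) (t s : ℝ) :
    HasDerivAt (fun x => ∑ i ∈ Finset.range k, iteratedDeriv i φ x * (t - x) ^ i / (Nat.factorial i))
      ((k : ℝ) * iteratedDeriv k φ s * (t - s) ^ (k - 1) / (Nat.factorial k)) s := by
  induction k with
  | zero => simpa using hasDerivAt_const s (0 : ℝ)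
  | succ k IH =>
    have IH' := IH (fun i hi => hd i (Nat.lt_succ_of_lt hi))
    have hgk : HasDerivAt (iteratedDeriv k φ) (iteratedDeriv (k + 1) φ s) s := by
      have := ((hd k (Nat.lt_succ_self k)) s).hasDerivAt
      rwa [← iteratedDeriv_succ] at this
    have hpow : HasDerivAt (fun x => (t - x) ^ k) ((k : ℝ) * (t - s) ^ (k - 1) * (-1)) s :=
      ((hasDerivAt_id s).const_sub t).pow k
    have hterm : HasDerivAt (fun x => iteratedDeriv k φ x * (t - x) ^ k / (Nat.factorial k))
        ((iteratedDeriv (k + 1) φ s * (t - s) ^ k +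
          iteratedDeriv k φ s * ((k : ℝ) * (t - s) ^ (k - 1) * (-1))) / (Nat.factorial k)) s := by
      simpa [div_eq_mul_inv] using (hgk.mul hpow).mul_const ((Nat.factorial k : ℝ))⁻¹
    have := IH'.add hterm
    have heq : ∀ x : ℝ, (∑ i ∈ Finset.range (k+1), iteratedDeriv i φ x * (t - x) ^ i / (Nat.factorial i))
        = (∑ i ∈ Finset.range k, iteratedDeriv i φ x * (t - x) ^ i / (Nat.factorial i))
          + iteratedDeriv k φ x * (t - x) ^ k / (Nat.factorial k) := by
      intro x; rw [Finset.sum_range_succ]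
    rw [show (fun x => ∑ i ∈ Finset.range (k+1), iteratedDeriv i φ x * (t - x) ^ i / (Nat.factorial i))
        = fun x => (∑ i ∈ Finset.range k, iteratedDeriv i φ x * (t - x) ^ i / (Nat.factorial i))
          + iteratedDeriv k φ x * (t - x) ^ k / (Nat.factorial k) from funext heq]
    convert this using 1
    · rfl
    · rfl
    · rfl
    rcases Nat.eq_zero_or_pos k with hk | hk
    · subst hk; simp
    · have h1 : ((k+1 : ℕ) : ℝ) ≠ 0 := by positivity
      have hfac : (Nat.factorial (k+1) : ℝ) = (k+1) * Nat.factorial k := by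
        rw [Nat.factorial_succ]; push_cast; ring
      have hk1 : k - 1 + 1 = k := Nat.succ_pred_eq_of_pos hk
      have hpow2 : (t - s) ^ k = (t - s) ^ (k - 1) * (t - s) := by
        rw [← pow_succ, hk1]
      have hfk : (Nat.factorial k : ℝ) ≠ 0 := by positivity
      push_cast [hfac, hpow2]
      field_simp
      ring

lemma taylorPoly_sub {k : ℕ} {φ : ℝ → ℝ} (hφ : ContDiff ℝ k φ) (x y t : ℝ) :
    taylorPoly φ k y t - taylorPoly φ k x t
      = (∫ s in x..y, (k : ℝ) * (iteratedDeriv k φ s - iteratedDeriv k φ y) * (t - s) ^ (k - 1)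
            / (Nat.factorial k))
        + (iteratedDeriv k φ y - iteratedDeriv k φ x) * (t - x) ^ k / (Nat.factorial k) := by
  set g := iteratedDeriv k φ with hg
  have hd : ∀ i < k, Differentiable ℝ (iteratedDeriv i φ) := fun i hi =>
    hφ.differentiable_iteratedDeriv i (by exact_mod_cast hi)
  have hc : Continuous g := hφ.continuous_iteratedDeriv k le_rfl
  have hint1 : IntervalIntegrable (fun s => (k : ℝ) * g s * (t - s) ^ (k-1) / (Nat.factorial k))
      volume x y := by
    apply Continuous.intervalIntegrable
    continuity
  have hint2 : IntervalIntegrable (fun s => (k : ℝ) * g y * (t - s) ^ (k-1) / (Nat.factorial k))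
      volume x y := by
    apply Continuous.intervalIntegrable
    continuity
  have step1 : (∑ i ∈ Finset.range k, iteratedDeriv i φ y * (t - y) ^ i / (Nat.factorial i))
      - (∑ i ∈ Finset.range k, iteratedDeriv i φ x * (t - x) ^ i / (Nat.factorial i))
      = ∫ s in x..y, (k : ℝ) * g s * (t - s) ^ (k-1) / (Nat.factorial k) := by
    exact (intervalIntegral.integral_eq_sub_of_hasDerivAt
      (f := fun z => ∑ i ∈ Finset.range k, iteratedDeriv i φ z * (t - z) ^ i / (Nat.factorial i))
      (f' := fun s => (k : ℝ) * g s * (t - s) ^ (k-1) / (Nat.factorial k))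
      (fun s _ => hasDerivAt_taylorA φ k hd t s) hint1).symm
  have step2 : -(g y * (t - y) ^ k / (Nat.factorial k)) + g y * (t - x) ^ k / (Nat.factorial k)
      = ∫ s in x..y, (k : ℝ) * g y * (t - s) ^ (k-1) / (Nat.factorial k) := by
    have h := intervalIntegral.integral_eq_sub_of_hasDerivAt
      (f := fun s => -(g y * (t - s) ^ k / (Nat.factorial k)))
      (f' := fun s => (k : ℝ) * g y * (t - s) ^ (k-1) / (Nat.factorial k))
      (a := x) (b := y) (fun s _ => ?_) hint2
    · rw [h]; ring
    · have hpow : HasDerivAt (fun u => (t - u) ^ k) ((k : ℝ) * (t - s) ^ (k - 1) * (-1)) s :=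
        ((hasDerivAt_id s).const_sub t).pow k
      have := ((hpow.const_mul (g y)).div_const ((Nat.factorial k : ℝ))).neg
      convert this using 1
      · rfl
      ring
  have step3 : (∫ s in x..y, (k : ℝ) * (g s - g y) * (t - s) ^ (k-1) / (Nat.factorial k))
      = (∫ s in x..y, (k : ℝ) * g s * (t - s) ^ (k-1) / (Nat.factorial k))
        - ∫ s in x..y, (k : ℝ) * g y * (t - s) ^ (k-1) / (Nat.factorial k) := by
    rw [← intervalIntegral.integral_sub hint1 hint2]
    congr 1; funext s; ring
  have expand : ∀ z : ℝ, taylorPoly φ k z t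
      = (∑ i ∈ Finset.range k, iteratedDeriv i φ z * (t - z) ^ i / (Nat.factorial i))
        + g z * (t - z) ^ k / (Nat.factorial k) := by
    intro z; unfold taylorPoly; rw [Finset.sum_range_succ]
  rw [expand x, expand y, step3, ← step1, ← step2]
  ring

lemma abs_sub_le_of_uIoc {x t s : ℝ} (hs : s ∈ Set.uIoc x t) : |s - t| ≤ |t - x| := by
  rcases Set.mem_uIoc.1 hs with ⟨h1, h2⟩ | ⟨h1, h2⟩
  · rw [abs_sub_comm, abs_of_nonneg (by linarith), abs_of_nonneg (by linarith)]; linarith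
  · rw [abs_of_nonneg (by linarith), abs_of_nonpos (by linarith)]; linarith

lemma numer_bound {k : ℕ} {φ : ℝ → ℝ} (hφ : ContDiff ℝ k φ) {L : ℝ}
    (hLip : ∀ x ∈ Icc (-1 : ℝ) 1, ∀ y ∈ Icc (-1 : ℝ) 1,
      |iteratedDeriv k φ x - iteratedDeriv k φ y| ≤ L * |x - y|)
    (hL0 : 0 ≤ L)
    {x t : ℝ} (hx : x ∈ Icc (-1 : ℝ) 1) (ht : t ∈ Icc (-1 : ℝ) 1) :
    |φ t - taylorPoly φ k x t| ≤ (k + 1) * L * |t - x| ^ (k + 1) / (Nat.factorial k) := by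
  set g := iteratedDeriv k φ with hg
  have key := taylorPoly_sub hφ x t t
  rw [taylorPoly_self] at key
  have hmem : ∀ s ∈ Set.uIoc x t, s ∈ Icc (-1 : ℝ) 1 := by
    intro s hs
    have := Set.uIoc_subset_uIcc hs
    rcases Set.mem_uIcc.1 this with ⟨h1, h2⟩ | ⟨h1, h2⟩ <;>
      constructor <;> [linarith [hx.1]; linarith [ht.2]; linarith [ht.1]; linarith [hx.2]]
  have habs : ∀ s ∈ Set.uIoc x t,
      ‖(k : ℝ) * (g s - g t) * (t - s) ^ (k - 1) / (Nat.factorial k)‖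
        ≤ (k : ℝ) * L * |t - x| ^ k / (Nat.factorial k) := by
    intro s hs
    have h1 : |g s - g t| ≤ L * |s - t| := hLip s (hmem s hs) t ht
    have h2 : |s - t| ≤ |t - x| := abs_sub_le_of_uIoc hs
    have h3 : |t - s| ^ (k-1) ≤ |t - x| ^ (k-1) := by
      apply pow_le_pow_left₀ (abs_nonneg _)
      rw [abs_sub_comm]; exact le_trans h2 le_rfl
    rw [Real.norm_eq_abs, abs_div, abs_mul, abs_mul, abs_pow]
    rcases Nat.eq_zero_or_pos k with hk | hk
    · subst hk; simp
    · have hk1 : k - 1 + 1 = k := Nat.succ_pred_eq_of_pos hk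
      have : |g s - g t| * |t - s| ^ (k - 1) ≤ (L * |t - x|) * |t - x| ^ (k-1) := by
        apply mul_le_mul (le_trans h1 (by nlinarith [abs_nonneg (s-t)])) h3
          (by positivity) (by positivity)
      have hxk : (L * |t - x|) * |t - x| ^ (k-1) = L * |t - x| ^ k := by
        have hp : |t - x| ^ k = |t - x| ^ (k-1) * |t - x| := by rw [← pow_succ, hk1]
        rw [hp]; ring
      rw [abs_of_nonneg (by positivity : (0:ℝ) ≤ (k:ℝ)),
        abs_of_nonneg (by positivity : (0:ℝ) ≤ ((Nat.factorial k : ℕ) : ℝ))]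
      rw [hxk] at this
      rw [div_le_div_iff_of_pos_right (by positivity)]
      calc (k:ℝ) * |g s - g t| * |t - s| ^ (k-1)
          ≤ (k:ℝ) * (L * |t - x| ^ k) := by
            rw [mul_assoc]
            exact mul_le_mul_of_nonneg_left this (by positivity)
        _ = (k:ℝ) * L * |t - x| ^ k := by ring
  have hbound1 : ‖∫ s in x..t, (k : ℝ) * (g s - g t) * (t - s) ^ (k - 1) / (Nat.factorial k)‖
      ≤ ((k : ℝ) * L * |t - x| ^ k / (Nat.factorial k)) * |t - x| := by
    exact intervalIntegral.norm_integral_le_of_norm_le_const habs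
  have hbound2 : |(g t - g x) * (t - x) ^ k / (Nat.factorial k)|
      ≤ L * |t - x| ^ (k+1) / (Nat.factorial k) := by
    rw [abs_div, abs_mul, abs_pow, abs_of_nonneg (by positivity : (0:ℝ) ≤ ((Nat.factorial k:ℕ):ℝ))]
    rw [div_le_div_iff_of_pos_right (by positivity)]
    have h1 : |g t - g x| ≤ L * |t - x| := hLip t ht x hx
    calc |g t - g x| * |t - x| ^ k ≤ (L * |t - x|) * |t - x| ^ k :=
          mul_le_mul_of_nonneg_right h1 (by positivity)
      _ = L * |t - x| ^ (k+1) := by rw [pow_succ]; ring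
  rw [key]
  refine (abs_add_le _ _).trans ?_
  rw [Real.norm_eq_abs] at hbound1
  have : ((k : ℝ) * L * |t - x| ^ k / (Nat.factorial k)) * |t - x|
      = (k : ℝ) * L * |t - x| ^ (k+1) / (Nat.factorial k) := by
    rw [pow_succ]; ring
  rw [this] at hbound1
  have := add_le_add hbound1 hbound2
  refine this.trans (le_of_eq ?_)
  push_cast
  ring

lemma F_bound {k : ℕ} {φ : ℝ → ℝ} (hφ : ContDiff ℝ k φ) {L : ℝ}
    (hLip : ∀ x ∈ Icc (-1 : ℝ) 1, ∀ y ∈ Icc (-1 : ℝ) 1,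
      |iteratedDeriv k φ x - iteratedDeriv k φ y| ≤ L * |x - y|)
    (hL0 : 0 ≤ L)
    {x t : ℝ} (hx : x ∈ Icc (-1 : ℝ) 1) (ht : t ∈ Icc (-1 : ℝ) 1) :
    |taylorRemainderQuot φ k x t| ≤ (k + 1) * L := by
  have hfac : (1:ℝ) ≤ (Nat.factorial k : ℝ) := by
    exact_mod_cast Nat.one_le_iff_ne_zero.mpr (Nat.factorial_ne_zero k)
  rcases eq_or_ne t x with h | h
  · subst h
    unfold taylorRemainderQuot
    rw [sub_self, zero_pow (Nat.succ_ne_zero k), div_zero, abs_zero]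
    positivity
  · unfold taylorRemainderQuot
    rw [abs_div, abs_pow]
    have htx : (0:ℝ) < |t - x| := abs_pos.mpr (sub_ne_zero.mpr h)
    rw [div_le_iff₀ (by positivity)]
    have h1 := numer_bound hφ hLip hL0 hx ht
    refine h1.trans ?_
    rw [div_le_iff₀ (by positivity)]
    nlinarith [mul_le_mul_of_nonneg_left hfac
      (show (0:ℝ) ≤ ((k:ℝ)+1) * L * |t - x| ^ (k+1) by positivity)]

lemma abs_pow_sub_pow (a b : ℝ) (n : ℕ) {M : ℝ} (ha : |a| ≤ M) (hb : |b| ≤ M) :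
    |a ^ n - b ^ n| ≤ n * M ^ (n - 1) * |a - b| := by
  have hM : 0 ≤ M := le_trans (abs_nonneg a) ha
  rw [← geom_sum₂_mul, abs_mul]
  apply mul_le_mul_of_nonneg_right ?_ (abs_nonneg _) |>.trans le_rfl
  refine (Finset.abs_sum_le_sum_abs _ _).trans ?_
  have hterm : ∀ i ∈ Finset.range n, |a ^ i * b ^ (n - 1 - i)| ≤ M ^ (n - 1) := by
    intro i hi
    rw [abs_mul, abs_pow, abs_pow]
    have h1 : |a| ^ i ≤ M ^ i := pow_le_pow_left₀ (abs_nonneg a) ha i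
    have h2 : |b| ^ (n-1-i) ≤ M ^ (n-1-i) := pow_le_pow_left₀ (abs_nonneg b) hb _
    calc |a| ^ i * |b| ^ (n-1-i) ≤ M ^ i * M ^ (n-1-i) :=
          mul_le_mul h1 h2 (by positivity) (by positivity)
      _ = M ^ (i + (n-1-i)) := (pow_add M i _).symm
      _ = M ^ (n-1) := by
          congr 1
          have := Finset.mem_range.1 hi
          omega
  calc (∑ i ∈ Finset.range n, |a ^ i * b ^ (n - 1 - i)|)
      ≤ ∑ _i ∈ Finset.range n, M ^ (n-1) := Finset.sum_le_sum hterm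
    _ = n * M ^ (n-1) := by rw [Finset.sum_const, Finset.card_range, nsmul_eq_mul]

lemma abs_t_sub_le_max {x y t s : ℝ} (hs : s ∈ Set.uIoc x y) :
    |t - s| ≤ max |t - x| |t - y| := by
  rcases Set.mem_uIoc.1 hs with ⟨h1, h2⟩ | ⟨h1, h2⟩
  · exact (abs_le_max_abs_abs (by linarith) (by linarith)).trans (le_of_eq (max_comm _ _))
  · exact abs_le_max_abs_abs (by linarith) (by linarith)

lemma taylorPoly_diff_bound {k : ℕ} {φ : ℝ → ℝ} (hφ : ContDiff ℝ k φ) {L : ℝ}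
    (hLip : ∀ x ∈ Icc (-1 : ℝ) 1, ∀ y ∈ Icc (-1 : ℝ) 1,
      |iteratedDeriv k φ x - iteratedDeriv k φ y| ≤ L * |x - y|)
    (hL0 : 0 ≤ L)
    {x y t : ℝ} (hx : x ∈ Icc (-1 : ℝ) 1) (hy : y ∈ Icc (-1 : ℝ) 1) (ht : t ∈ Icc (-1 : ℝ) 1) :
    |taylorPoly φ k y t - taylorPoly φ k x t|
      ≤ (2 * k + 1) * L * |x - y| * (max |t - x| |t - y|) ^ k := by
  set g := iteratedDeriv k φ with hg
  set m := max |t - x| |t - y| with hm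
  set δ := |x - y| with hδ
  have hm0 : 0 ≤ m := le_trans (abs_nonneg _) (le_max_left _ _)
  have hδ0 : 0 ≤ δ := abs_nonneg _
  have hδ2m : δ ≤ 2 * m := by
    have : |x - y| ≤ |t - x| + |t - y| := by
      calc |x - y| = |(t - y) - (t - x)| := by ring_nf
        _ ≤ |t - y| + |t - x| := abs_sub _ _
        _ = |t - x| + |t - y| := add_comm _ _
    have h1 : |t - x| ≤ m := le_max_left _ _
    have h2 : |t - y| ≤ m := le_max_right _ _
    linarith
  have hfac : (1:ℝ) ≤ (Nat.factorial k : ℝ) := by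
    exact_mod_cast Nat.one_le_iff_ne_zero.mpr (Nat.factorial_ne_zero k)
  have key := taylorPoly_sub hφ x y t
  have hmem : ∀ s ∈ Set.uIoc x y, s ∈ Icc (-1 : ℝ) 1 := by
    intro s hs
    have := Set.uIoc_subset_uIcc hs
    rcases Set.mem_uIcc.1 this with ⟨h1, h2⟩ | ⟨h1, h2⟩ <;>
      constructor <;> [linarith [hx.1]; linarith [hy.2]; linarith [hy.1]; linarith [hx.2]]
  have habs : ∀ s ∈ Set.uIoc x y,
      ‖(k : ℝ) * (g s - g y) * (t - s) ^ (k - 1) / (Nat.factorial k)‖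
        ≤ (k : ℝ) * L * δ * m ^ (k-1) / (Nat.factorial k) := by
    intro s hs
    have h1 : |g s - g y| ≤ L * |s - y| := hLip s (hmem s hs) y hy
    have h2 : |s - y| ≤ |y - x| := abs_sub_le_of_uIoc hs
    have h2' : |y - x| = δ := abs_sub_comm y x
    have h3 : |t - s| ^ (k-1) ≤ m ^ (k-1) :=
      pow_le_pow_left₀ (abs_nonneg _) (abs_t_sub_le_max hs) _
    rw [Real.norm_eq_abs, abs_div, abs_mul, abs_mul, abs_pow,
      abs_of_nonneg (by positivity : (0:ℝ) ≤ (k:ℝ)),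
      abs_of_nonneg (by positivity : (0:ℝ) ≤ ((Nat.factorial k : ℕ) : ℝ))]
    rw [div_le_div_iff_of_pos_right (by positivity)]
    have hgs : |g s - g y| ≤ L * δ := by
      rw [← h2']; exact h1.trans (mul_le_mul_of_nonneg_left h2 hL0)
    calc (k:ℝ) * |g s - g y| * |t - s| ^ (k-1) ≤ (k:ℝ) * (L * δ) * m ^ (k-1) :=
          mul_le_mul (mul_le_mul_of_nonneg_left hgs (by positivity)) h3 (by positivity)
            (by positivity)
      _ = (k:ℝ) * L * δ * m ^ (k-1) := by ring
  have hbound1 : |∫ s in x..y, (k : ℝ) * (g s - g y) * (t - s) ^ (k - 1) / (Nat.factorial k)|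
      ≤ ((k : ℝ) * L * δ * m ^ (k-1) / (Nat.factorial k)) * δ := by
    have := intervalIntegral.norm_integral_le_of_norm_le_const habs
    rwa [Real.norm_eq_abs, abs_sub_comm y x] at this
  have hb1' : ((k : ℝ) * L * δ * m ^ (k-1) / (Nat.factorial k)) * δ ≤ 2 * k * L * δ * m ^ k := by
    rcases Nat.eq_zero_or_pos k with hk | hk
    · subst hk; simp
    · have hk1 : k - 1 + 1 = k := Nat.succ_pred_eq_of_pos hk
      have hpow : m ^ k = m ^ (k-1) * m := by rw [← pow_succ, hk1]
      have step1 : ((k : ℝ) * L * δ * m ^ (k-1) / (Nat.factorial k)) * δ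
          ≤ (k : ℝ) * L * δ * m ^ (k-1) * δ := by
        rw [div_mul_eq_mul_div, div_le_iff₀ (by positivity)]
        nlinarith [mul_le_mul_of_nonneg_left hfac
          (show (0:ℝ) ≤ (k:ℝ) * L * δ * m ^ (k-1) * δ by positivity)]
      refine step1.trans ?_
      rw [hpow]
      nlinarith [pow_nonneg hm0 (k-1), mul_le_mul_of_nonneg_left hδ2m
        (show (0:ℝ) ≤ (k:ℝ) * L * δ * m ^ (k-1) by positivity)]
  have hbound2 : |(g y - g x) * (t - x) ^ k / (Nat.factorial k)| ≤ L * δ * m ^ k := by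
    rw [abs_div, abs_mul, abs_pow,
      abs_of_nonneg (by positivity : (0:ℝ) ≤ ((Nat.factorial k : ℕ) : ℝ))]
    have h1 : |g y - g x| ≤ L * |y - x| := hLip y hy x hx
    have h2 : |t - x| ^ k ≤ m ^ k := pow_le_pow_left₀ (abs_nonneg _) (le_max_left _ _) _
    have : |g y - g x| * |t - x| ^ k ≤ (L * δ) * m ^ k := by
      apply mul_le_mul ?_ h2 (by positivity) (by positivity)
      rwa [abs_sub_comm y x, ← hδ] at h1
    calc |g y - g x| * |t - x| ^ k / (Nat.factorial k : ℝ)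
        ≤ (L * δ) * m ^ k / (Nat.factorial k : ℝ) := by
          rw [div_le_div_iff_of_pos_right (by positivity)]; exact this
      _ ≤ (L * δ) * m ^ k := by
          rw [div_le_iff₀ (by positivity)]
          nlinarith [mul_le_mul_of_nonneg_left hfac (show (0:ℝ) ≤ L * δ * m ^ k by positivity)]
  rw [key]
  refine (abs_add_le _ _).trans ?_
  have := add_le_add (hbound1.trans hb1') hbound2
  refine this.trans (le_of_eq ?_)
  push_cast
  ring

set_option maxHeartbeats 1000000 in
lemma pointwise_diff_bound {k : ℕ} {φ : ℝ → ℝ} (hφ : ContDiff ℝ k φ) {L : ℝ}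
    (hLip : ∀ x ∈ Icc (-1 : ℝ) 1, ∀ y ∈ Icc (-1 : ℝ) 1,
      |iteratedDeriv k φ x - iteratedDeriv k φ y| ≤ L * |x - y|)
    (hL0 : 0 ≤ L)
    {x y t : ℝ} (hx : x ∈ Icc (-1 : ℝ) 1) (hy : y ∈ Icc (-1 : ℝ) 1) (ht : t ∈ Icc (-1 : ℝ) 1)
    (htx : t ≠ x) :
    |taylorRemainderQuot φ k x t - taylorRemainderQuot φ k y t|
      ≤ ((k : ℝ) + 2) ^ 2 * 2 ^ (k + 4) * L * min 1 (|x - y| / |t - x|) := by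
  set δ := |x - y| with hδ
  set m := max |t - x| |t - y| with hm
  have htx0 : (0:ℝ) < |t - x| := abs_pos.mpr (sub_ne_zero.mpr htx)
  have hδ0 : 0 ≤ δ := abs_nonneg _
  have hm0 : 0 ≤ m := le_trans (abs_nonneg _) (le_max_left _ _)
  have hmin0 : 0 ≤ min 1 (δ / |t - x|) := le_min (by norm_num) (by positivity)
  have h2k : (1:ℝ) ≤ 2 ^ k := one_le_pow₀ (by norm_num)
  have hfac : (1:ℝ) ≤ (Nat.factorial k : ℝ) := by
    exact_mod_cast Nat.one_le_iff_ne_zero.mpr (Nat.factorial_ne_zero k)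
  rcases eq_or_ne x y with hxy | hxy
  · subst hxy
    rw [sub_self, abs_zero]
    positivity
  have hδpos : 0 < δ := abs_pos.mpr (sub_ne_zero.mpr hxy)
  have ht1 : |t - y| ≤ |t - x| + δ := by
    calc |t - y| = |(t - x) + (x - y)| := by ring_nf
      _ ≤ |t - x| + |x - y| := abs_add_le _ _
      _ = |t - x| + δ := rfl
  have ht2 : |t - x| ≤ |t - y| + δ := by
    calc |t - x| = |(t - y) + (y - x)| := by ring_nf
      _ ≤ |t - y| + |y - x| := abs_add_le _ _
      _ = |t - y| + δ := by rw [abs_sub_comm y x]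
  rcases le_or_gt m (4 * δ) with hnear | hfar
  · -- near case
    have hFx := F_bound hφ hLip hL0 hx ht
    have hFy := F_bound hφ hLip hL0 hy ht
    have h1 : |taylorRemainderQuot φ k x t - taylorRemainderQuot φ k y t|
        ≤ 2 * (((k:ℝ) + 1) * L) := by
      calc |taylorRemainderQuot φ k x t - taylorRemainderQuot φ k y t|
          ≤ |taylorRemainderQuot φ k x t| + |taylorRemainderQuot φ k y t| := abs_sub _ _
        _ ≤ ((k:ℝ)+1)*L + ((k:ℝ)+1)*L := add_le_add hFx hFy
        _ = 2 * (((k:ℝ) + 1) * L) := by ring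
    have htxm : |t - x| ≤ 4 * δ := le_trans (le_max_left _ _) hnear
    have hq : (1:ℝ)/4 ≤ δ / |t - x| := by
      rw [le_div_iff₀ htx0]
      linarith
    have hminq : (1:ℝ)/4 ≤ min 1 (δ / |t - x|) := le_min (by norm_num) hq
    refine h1.trans ?_
    have hcoef : 2 * (((k:ℝ) + 1) * L) ≤ ((k : ℝ) + 2) ^ 2 * 2 ^ (k + 4) * L * (1/4) := by
      have hpow : (2:ℝ) ^ (k+4) = 16 * 2 ^ k := by rw [pow_add]; norm_num [mul_comm]
      rw [hpow]
      nlinarith [sq_nonneg ((k:ℝ)), mul_nonneg (Nat.cast_nonneg k) hL0,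
        mul_le_mul_of_nonneg_left h2k (show (0:ℝ) ≤ 4*((k:ℝ)+2)^2*L by positivity)]
    refine hcoef.trans ?_
    exact mul_le_mul_of_nonneg_left hminq (by positivity)
  · -- far case
    have htx3 : 3 * δ < |t - x| := by
      have : m ≤ |t - x| + δ := max_le (by linarith) ht1
      linarith
    have hty3 : 3 * δ < |t - y| := by
      have : m ≤ |t - y| + δ := max_le ht2 (by linarith)
      linarith
    have hty0 : (0:ℝ) < |t - y| := by linarith
    have hty : t ≠ y := fun h => by rw [h, sub_self, abs_zero] at hty0; exact lt_irrefl 0 hty0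
    have htxne : t - x ≠ 0 := sub_ne_zero.mpr htx
    have htyne : t - y ≠ 0 := sub_ne_zero.mpr hty
    have hm43 : m ≤ 4/3 * |t - x| := by
      have : m ≤ |t - x| + δ := max_le (by linarith) ht1
      linarith
    have hApow : (0:ℝ) < |t - x| ^ (k+1) := pow_pos htx0 _
    have hBpow : (0:ℝ) < |t - y| ^ (k+1) := pow_pos hty0 _
    have hid : taylorRemainderQuot φ k x t - taylorRemainderQuot φ k y t
        = (taylorPoly φ k y t - taylorPoly φ k x t) / (t - x) ^ (k+1)
          + (φ t - taylorPoly φ k y t) * (1 / (t - x) ^ (k+1) - 1 / (t - y) ^ (k+1)) := by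
      unfold taylorRemainderQuot
      ring
    -- Part A
    have hAnum := taylorPoly_diff_bound hφ hLip hL0 hx hy ht
    have hA : |(taylorPoly φ k y t - taylorPoly φ k x t) / (t - x) ^ (k+1)|
        ≤ (2 * (k:ℝ) + 1) * L * δ * m ^ k / |t - x| ^ (k+1) := by
      rw [abs_div, abs_pow]
      exact div_le_div₀ (by positivity) hAnum hApow (le_refl _)
    have hmk : m ^ k ≤ (4/3) ^ k * |t - x| ^ k := by
      have := pow_le_pow_left₀ hm0 hm43 k
      rwa [mul_pow] at this
    have hA2 : (2 * (k:ℝ) + 1) * L * δ * m ^ k / |t - x| ^ (k+1)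
        ≤ (2 * (k:ℝ) + 1) * (4/3) ^ k * L * (δ / |t - x|) := by
      rw [div_le_iff₀ hApow, pow_succ |t - x| k]
      have expand : (2 * (k:ℝ) + 1) * (4/3) ^ k * L * (δ / |t - x|) * (|t - x| ^ k * |t - x|)
          = (2 * (k:ℝ) + 1) * L * δ * ((4/3) ^ k * |t - x| ^ k) := by
        field_simp
      rw [expand]
      exact mul_le_mul_of_nonneg_left hmk (by positivity)
    -- Part B
    have hNy := numer_bound hφ hLip hL0 hy ht
    have hNy' : |φ t - taylorPoly φ k y t| ≤ ((k:ℝ)+1) * L * |t - y| ^ (k+1) := by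
      refine hNy.trans ?_
      rw [div_le_iff₀ (by positivity)]
      nlinarith [mul_le_mul_of_nonneg_left hfac
        (show (0:ℝ) ≤ ((k:ℝ)+1) * L * |t - y| ^ (k+1) by positivity)]
    have hpowdiff : |(t - y) ^ (k+1) - (t - x) ^ (k+1)| ≤ ((k:ℝ)+1) * m ^ k * δ := by
      have h := abs_pow_sub_pow (t - y) (t - x) (k+1) (le_max_right _ _) (le_max_left _ _)
      have heq : |(t - y) - (t - x)| = δ := by rw [show (t-y) - (t-x) = x - y by ring]
      rw [heq] at h
      simpa using h
    have hinvdiff : |1 / (t - x) ^ (k+1) - 1 / (t - y) ^ (k+1)|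
        ≤ ((k:ℝ)+1) * m ^ k * δ / (|t - x| ^ (k+1) * |t - y| ^ (k+1)) := by
      have hrw : 1 / (t - x) ^ (k+1) - 1 / (t - y) ^ (k+1)
          = ((t - y) ^ (k+1) - (t - x) ^ (k+1)) / ((t - x) ^ (k+1) * (t - y) ^ (k+1)) := by
        rw [div_sub_div _ _ (pow_ne_zero _ htxne) (pow_ne_zero _ htyne), one_mul, mul_one]
      rw [hrw, abs_div, abs_mul, abs_pow, abs_pow]
      exact div_le_div₀ (by positivity) hpowdiff (by positivity) (le_refl _)
    have hB : |(φ t - taylorPoly φ k y t) * (1 / (t - x) ^ (k+1) - 1 / (t - y) ^ (k+1))|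
        ≤ ((k:ℝ)+1)^2 * (4/3) ^ k * L * (δ / |t - x|) := by
      rw [abs_mul]
      have step1 : |φ t - taylorPoly φ k y t| * |1 / (t - x) ^ (k+1) - 1 / (t - y) ^ (k+1)|
          ≤ (((k:ℝ)+1) * L * |t - y| ^ (k+1))
            * (((k:ℝ)+1) * m ^ k * δ / (|t - x| ^ (k+1) * |t - y| ^ (k+1))) :=
        mul_le_mul hNy' hinvdiff (abs_nonneg _) (by positivity)
      refine step1.trans ?_
      have hsimp : (((k:ℝ)+1) * L * |t - y| ^ (k+1))
            * (((k:ℝ)+1) * m ^ k * δ / (|t - x| ^ (k+1) * |t - y| ^ (k+1)))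
          = ((k:ℝ)+1)^2 * L * m ^ k * δ / |t - x| ^ (k+1) := by
        rw [mul_comm (|t - x| ^ (k+1)) (|t - y| ^ (k+1)), ← div_div, ← mul_div_assoc]
        congr 1
        rw [← mul_div_assoc, show (((k:ℝ)+1) * L * |t - y| ^ (k+1)) * (((k:ℝ)+1) * m ^ k * δ)
            = (((k:ℝ)+1)^2 * L * m ^ k * δ) * |t - y| ^ (k+1) from by ring,
          mul_div_cancel_right₀ _ (ne_of_gt hBpow)]
      rw [hsimp, div_le_iff₀ hApow, pow_succ |t - x| k]
      have expand : ((k:ℝ)+1)^2 * (4/3) ^ k * L * (δ / |t - x|) * (|t - x| ^ k * |t - x|)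
          = ((k:ℝ)+1)^2 * L * δ * ((4/3) ^ k * |t - x| ^ k) := by
        field_simp
      rw [expand]
      calc ((k:ℝ)+1)^2 * L * m ^ k * δ = ((k:ℝ)+1)^2 * L * δ * m ^ k := by ring
        _ ≤ ((k:ℝ)+1)^2 * L * δ * ((4/3) ^ k * |t - x| ^ k) :=
            mul_le_mul_of_nonneg_left hmk (by positivity)
    -- combine
    rw [hid]
    refine (abs_add_le _ _).trans ?_
    have hsum := add_le_add (hA.trans hA2) hB
    refine hsum.trans ?_
    have h43 : ((4:ℝ)/3) ^ k ≤ 2 ^ k := pow_le_pow_left₀ (by norm_num) (by norm_num) k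
    have hmin_eq : δ / |t - x| ≤ 1 := by
      rw [div_le_one htx0]; linarith
    have hminv : min 1 (δ / |t - x|) = δ / |t - x| := min_eq_right hmin_eq
    rw [hminv]
    have hdpos : (0:ℝ) ≤ δ / |t - x| := by positivity
    have hcoef : (2 * (k:ℝ) + 1) * (4/3) ^ k + ((k:ℝ)+1)^2 * (4/3) ^ k
        ≤ ((k : ℝ) + 2) ^ 2 * 2 ^ (k + 4) := by
      have : (2 * (k:ℝ) + 1) * (4/3) ^ k + ((k:ℝ)+1)^2 * (4/3) ^ k
          = ((2 * (k:ℝ) + 1) + ((k:ℝ)+1)^2) * (4/3) ^ k := by ring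
      rw [this]
      have h1 : (2 * (k:ℝ) + 1) + ((k:ℝ)+1)^2 ≤ ((k:ℝ)+2)^2 := by nlinarith [sq_nonneg (k:ℝ)]
      have h2 : ((4:ℝ)/3) ^ k ≤ 2 ^ k * 2 ^ 4 := by nlinarith [pow_nonneg (show (0:ℝ) ≤ 4/3 by norm_num) k, h43, pow_pos (show (0:ℝ) < 2 by norm_num) k]
      have h0 : (0:ℝ) ≤ (2 * (k:ℝ) + 1) + ((k:ℝ)+1)^2 := by positivity
      calc ((2 * (k:ℝ) + 1) + ((k:ℝ)+1)^2) * (4/3) ^ k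
          ≤ ((k:ℝ)+2)^2 * (2 ^ k * 2 ^ 4) := by
            apply mul_le_mul h1 h2 (by positivity) (by positivity)
        _ = ((k:ℝ)+2)^2 * 2 ^ (k+4) := by rw [pow_add]
    calc (2 * (k:ℝ) + 1) * (4/3) ^ k * L * (δ / |t - x|)
          + ((k:ℝ)+1)^2 * (4/3) ^ k * L * (δ / |t - x|)
        = ((2 * (k:ℝ) + 1) * (4/3) ^ k + ((k:ℝ)+1)^2 * (4/3) ^ k) * (L * (δ / |t - x|)) := by
          ring
      _ ≤ (((k : ℝ) + 2) ^ 2 * 2 ^ (k + 4)) * (L * (δ / |t - x|)) :=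
          mul_le_mul_of_nonneg_right hcoef (by positivity)
      _ = ((k : ℝ) + 2) ^ 2 * 2 ^ (k + 4) * L * (δ / |t - x|) := by ring

lemma sqrt_add_le' (a b : ℝ) (ha : 0 ≤ a) (hb : 0 ≤ b) :
    Real.sqrt (a + b) ≤ Real.sqrt a + Real.sqrt b := by
  have h := Real.sqrt_le_sqrt (show a + b ≤ (Real.sqrt a + Real.sqrt b)^2 by
    nlinarith [Real.sq_sqrt ha, Real.sq_sqrt hb, Real.sqrt_nonneg a, Real.sqrt_nonneg b,
      mul_nonneg (Real.sqrt_nonneg a) (Real.sqrt_nonneg b)])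
  rwa [Real.sqrt_sq (by positivity)] at h

lemma sqrt_two_le : Real.sqrt 2 ≤ 3/2 := by
  rw [show (3/2:ℝ) = Real.sqrt ((3/2)^2) from (Real.sqrt_sq (by norm_num)).symm]
  exact Real.sqrt_le_sqrt (by norm_num)

lemma ii_one_sub_rpow (r : ℝ) (hr : -1 < r) (a b : ℝ) :
    IntervalIntegrable (fun t => (1 - t) ^ r) volume a b := by
  have h := intervalIntegral.intervalIntegrable_rpow' (a := 1 - a) (b := 1 - b) hr
  have h2 := h.comp_sub_left 1
  simpa using h2

lemma integral_one_sub_neg_half (a b : ℝ) :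
    ∫ t in a..b, (1 - t) ^ (-(1/2) : ℝ)
      = 2 * ((1 - a) ^ ((1:ℝ)/2) - (1 - b) ^ ((1:ℝ)/2)) := by
  have h := intervalIntegral.integral_comp_sub_left (a := a) (b := b)
    (fun s => s ^ (-(1/2) : ℝ)) 1
  rw [h, integral_rpow (Or.inl (by norm_num))]
  norm_num
  ring

lemma J_bound {x δ : ℝ} (hx : x ∈ Icc (-1:ℝ) 1) (hδ : 0 < δ) (hδ2 : δ ≤ 2) :
    ∫ t in Ioo (-1:ℝ) 1, min 1 (δ / |t - x|) * (1 - t) ^ (-(1/2) : ℝ)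
      ≤ 10 * Real.sqrt δ := by
  obtain ⟨hxl, hxr⟩ := hx
  set f : ℝ → ℝ := fun t => min 1 (δ / |t - x|) * (1 - t) ^ (-(1/2) : ℝ) with hf
  set g : ℝ → ℝ := fun t => (1 - t) ^ (-(1/2) : ℝ) with hgdef
  have hmeas_f : Measurable f := by
    apply Measurable.mul
    · exact (measurable_const.min (measurable_const.div
        ((measurable_id.sub_const x).abs)))
    · exact (measurable_const.sub measurable_id).pow measurable_const
  have hg_nonneg : ∀ t : ℝ, t ≤ 1 → 0 ≤ g t := fun t ht =>
    Real.rpow_nonneg (by linarith) _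
  have hmin_nonneg : ∀ t : ℝ, 0 ≤ min 1 (δ / |t - x|) := fun t =>
    le_min (by norm_num) (by positivity)
  have hf_nonneg : ∀ t : ℝ, t ≤ 1 → 0 ≤ f t := fun t ht =>
    mul_nonneg (hmin_nonneg t) (hg_nonneg t ht)
  have hf_le_g : ∀ t : ℝ, t ≤ 1 → f t ≤ g t := by
    intro t ht
    calc f t ≤ 1 * g t := mul_le_mul_of_nonneg_right (min_le_left _ _) (hg_nonneg t ht)
      _ = g t := one_mul _
  have hg_ii : ∀ a b : ℝ, IntervalIntegrable g volume a b :=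
    fun a b => ii_one_sub_rpow _ (by norm_num) a b
  have hg_int_Icc : ∀ a b : ℝ, IntegrableOn g (Icc a b) := by
    intro a b
    rcases le_or_gt a b with hab | hab
    · rw [integrableOn_Icc_iff_integrableOn_Ioc]
      exact (intervalIntegrable_iff_integrableOn_Ioc_of_le hab).1 (hg_ii a b)
    · rw [Icc_eq_empty (not_le.mpr hab)]; exact integrableOn_empty
  have hg_int : IntegrableOn g (Ioo (-1:ℝ) 1) :=
    ((hg_int_Icc (-1) 1).mono_set Ioo_subset_Icc_self)
  have hf_int : IntegrableOn f (Ioo (-1:ℝ) 1) := by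
    apply Integrable.mono' hg_int (hmeas_f.aestronglyMeasurable)
    filter_upwards [ae_restrict_mem measurableSet_Ioo] with t ht
    rw [Real.norm_eq_abs, abs_of_nonneg (hf_nonneg t ht.2.le)]
    exact hf_le_g t ht.2.le
  have hf_intS : ∀ S : Set ℝ, S ⊆ Ioo (-1:ℝ) 1 → IntegrableOn f S :=
    fun S hS => hf_int.mono_set hS
  set S1 := Ioo (-1:ℝ) 1 ∩ Icc (x-δ) (x+δ) with hS1
  set S2 := Ioo (-1:ℝ) 1 ∩ Iio (x-δ) with hS2
  set S34 := Ioo (-1:ℝ) 1 ∩ Ioi (x+δ) with hS34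
  set S3 := S34 ∩ Iic ((1+x)/2) with hS3
  set S4 := S34 ∩ Ioi ((1+x)/2) with hS4
  have hS1m : MeasurableSet S1 := measurableSet_Ioo.inter measurableSet_Icc
  have hS2m : MeasurableSet S2 := measurableSet_Ioo.inter measurableSet_Iio
  have hS34m : MeasurableSet S34 := measurableSet_Ioo.inter measurableSet_Ioi
  have hS3m : MeasurableSet S3 := hS34m.inter measurableSet_Iic
  have hS4m : MeasurableSet S4 := hS34m.inter measurableSet_Ioi
  have hS1sub : S1 ⊆ Ioo (-1:ℝ) 1 := inter_subset_left
  have hS2sub : S2 ⊆ Ioo (-1:ℝ) 1 := inter_subset_left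
  have hS34sub : S34 ⊆ Ioo (-1:ℝ) 1 := inter_subset_left
  have hS3sub : S3 ⊆ Ioo (-1:ℝ) 1 := subset_trans inter_subset_left hS34sub
  have hS4sub : S4 ⊆ Ioo (-1:ℝ) 1 := subset_trans inter_subset_left hS34sub
  have hunion : Ioo (-1:ℝ) 1 = (S2 ∪ S1) ∪ S34 := by
    ext t
    simp only [hS1, hS2, hS34, mem_union, mem_inter_iff, mem_Ioo, mem_Icc, mem_Iio, mem_Ioi]
    constructor
    · intro h
      rcases lt_or_ge t (x - δ) with h1 | h1
      · exact Or.inl (Or.inl ⟨h, h1⟩)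
      · rcases le_or_gt t (x + δ) with h2 | h2
        · exact Or.inl (Or.inr ⟨h, h1, h2⟩)
        · exact Or.inr ⟨h, h2⟩
    · rintro ((⟨h, _⟩ | ⟨h, _⟩) | ⟨h, _⟩) <;> exact h
  have hsplit34 : S34 = S3 ∪ S4 := by
    ext t
    simp only [hS3, hS4, mem_union, mem_inter_iff, mem_Iic, mem_Ioi]
    constructor
    · intro h
      rcases le_or_gt t ((1+x)/2) with h1 | h1
      · exact Or.inl ⟨h, h1⟩
      · exact Or.inr ⟨h, h1⟩
    · rintro (⟨h, _⟩ | ⟨h, _⟩) <;> exact h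
  have hdisj21 : Disjoint S2 S1 := by
    rw [Set.disjoint_left]
    rintro a ⟨_, ha2⟩ ⟨_, ha1⟩
    rw [mem_Iio] at ha2
    exact absurd ha1.1 (not_le.mpr ha2)
  have hdisj234 : Disjoint (S2 ∪ S1) S34 := by
    rw [Set.disjoint_left]
    rintro a (⟨_, ha⟩ | ⟨_, ha⟩) ⟨_, hb⟩ <;> rw [mem_Ioi] at hb
    · rw [mem_Iio] at ha; linarith
    · linarith [ha.2]
  have hdisj34 : Disjoint S3 S4 := by
    rw [Set.disjoint_left]
    rintro a ⟨_, ha⟩ ⟨_, hb⟩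
    rw [mem_Iic] at ha; rw [mem_Ioi] at hb; linarith
  have hIsplit : ∫ t in Ioo (-1:ℝ) 1, f t
      = (∫ t in S2, f t) + (∫ t in S1, f t) + ((∫ t in S3, f t) + ∫ t in S4, f t) := by
    rw [hunion, setIntegral_union hdisj234 hS34m
        ((hf_intS _ (by rw [hunion]; exact subset_union_left)).mono_set le_rfl)
        (hf_intS _ hS34sub),
      setIntegral_union hdisj21 hS1m (hf_intS _ hS2sub) (hf_intS _ hS1sub),
      hsplit34, setIntegral_union hdisj34 hS4m (hf_intS _ hS3sub) (hf_intS _ hS4sub)]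
  -- four regional bounds
  have hsqδ : (0:ℝ) ≤ Real.sqrt δ := Real.sqrt_nonneg δ
  -- B1
  have B1 : (∫ t in S1, f t) ≤ 3 * Real.sqrt δ := by
    set lo := max (-1:ℝ) (x-δ) with hlo
    set hi := min (1:ℝ) (x+δ) with hhi
    have hlohi : lo ≤ hi := max_le (le_min (by norm_num) (by linarith)) (le_min (by linarith) (by linarith))
    have hhi1 : hi ≤ 1 := min_le_left _ _
    have hsub : S1 ⊆ Icc lo hi := by
      rintro t ⟨hIoo, hIcc⟩
      exact ⟨max_le hIoo.1.le hIcc.1, le_min hIoo.2.le hIcc.2⟩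
    have step1 : (∫ t in S1, f t) ≤ ∫ t in S1, g t :=
      setIntegral_mono_on (hf_intS S1 hS1sub) (hg_int.mono_set hS1sub) hS1m
        (fun t ht => hf_le_g t (hS1sub ht).2.le)
    have step2 : (∫ t in S1, g t) ≤ ∫ t in Icc lo hi, g t := by
      apply setIntegral_mono_set (hg_int_Icc lo hi) ?_ (HasSubset.Subset.eventuallyLE hsub)
      filter_upwards [ae_restrict_mem measurableSet_Icc] with t ht
      exact hg_nonneg t (ht.2.trans hhi1)
    have step3 : (∫ t in Icc lo hi, g t) = ∫ t in lo..hi, g t := by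
      rw [integral_Icc_eq_integral_Ioc, ← intervalIntegral.integral_of_le hlohi]
    have step4 : (∫ t in lo..hi, g t) = 2 * ((1-lo) ^ ((1:ℝ)/2) - (1-hi) ^ ((1:ℝ)/2)) :=
      integral_one_sub_neg_half lo hi
    have hrw1 : (1-lo) ^ ((1:ℝ)/2) = Real.sqrt (1-lo) := (Real.sqrt_eq_rpow _).symm
    have hrw2 : (1-hi) ^ ((1:ℝ)/2) = Real.sqrt (1-hi) := (Real.sqrt_eq_rpow _).symm
    have hkey : Real.sqrt (1-lo) ≤ Real.sqrt (1-hi) + Real.sqrt (hi - lo) := by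
      have := sqrt_add_le' (1-hi) (hi-lo) (by linarith) (by linarith)
      rwa [show (1-hi) + (hi-lo) = 1 - lo by ring] at this
    have hhl : hi - lo ≤ 2*δ := by
      have h1 : x - δ ≤ lo := le_max_right _ _
      have h2 : hi ≤ x + δ := min_le_right _ _
      linarith
    have e2 : Real.sqrt (hi-lo) ≤ Real.sqrt (2*δ) := Real.sqrt_le_sqrt hhl
    have e3 : Real.sqrt (2*δ) = Real.sqrt 2 * Real.sqrt δ := Real.sqrt_mul (by norm_num) δ
    have e4 := sqrt_two_le
    calc (∫ t in S1, f t) ≤ 2 * ((1-lo) ^ ((1:ℝ)/2) - (1-hi) ^ ((1:ℝ)/2)) := by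
          rw [← step4, ← step3]; exact step1.trans step2
      _ ≤ 3 * Real.sqrt δ := by
          rw [hrw1, hrw2]
          nlinarith [hsqδ]
  -- integrability of tail majorants
  have hnm0 : (0:ℝ) ∉ Set.uIcc δ 2 := by
    rw [Set.uIcc_of_le hδ2]
    rintro ⟨h0, _⟩
    linarith
  have hbase : IntervalIntegrable (fun s : ℝ => s ^ (-(3/2):ℝ)) volume δ 2 :=
    intervalIntegral.intervalIntegrable_rpow (Or.inr hnm0)
  have htail : δ * ∫ s in δ..2, s ^ (-(3/2):ℝ) ≤ 2 * Real.sqrt δ := by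
    rw [integral_rpow (Or.inr ⟨by norm_num, hnm0⟩),
      show (-(3/2:ℝ)+1 : ℝ) = -(1/2) from by norm_num]
    have h1 : δ * δ ^ (-(1/2) : ℝ) = Real.sqrt δ := by
      rw [Real.sqrt_eq_rpow]
      nth_rewrite 1 [← Real.rpow_one δ]
      rw [← Real.rpow_add hδ]
      norm_num
    have h2 : (0:ℝ) ≤ (2:ℝ) ^ (-(1/2):ℝ) := Real.rpow_nonneg (by norm_num) _
    have expand : δ * (((2:ℝ) ^ (-(1/2):ℝ) - δ ^ (-(1/2):ℝ)) / (-(1/2)))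
        = 2 * (δ * δ ^ (-(1/2):ℝ)) - 2 * (δ * (2:ℝ) ^ (-(1/2):ℝ)) := by ring
    rw [expand, h1]
    nlinarith [mul_nonneg hδ.le h2]
  -- B2
  have B2 : (∫ t in S2, f t) ≤ 2 * Real.sqrt δ := by
    set m2 : ℝ → ℝ := fun t => δ * (x - t) ^ (-(3/2):ℝ) with hm2
    have hsub : S2 ⊆ Icc (x-2) (x-δ) := by
      rintro t ⟨hIoo, hIio⟩
      rw [mem_Iio] at hIio
      exact ⟨by linarith [hIoo.1], hIio.le⟩
    have hptwise : ∀ t ∈ S2, f t ≤ m2 t := by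
      rintro t ⟨hIoo, hIio⟩
      rw [mem_Iio] at hIio
      have hxt : 0 < x - t := by linarith
      have habs : |t - x| = x - t := by rw [abs_sub_comm, abs_of_pos hxt]
      have hm1 : min 1 (δ / |t - x|) ≤ δ / (x - t) :=
        (min_le_right _ _).trans (le_of_eq (by rw [habs]))
      have hg2 : g t ≤ (x - t) ^ (-(1/2):ℝ) :=
        Real.rpow_le_rpow_of_nonpos hxt (by linarith) (by norm_num)
      have hmul : f t ≤ (δ / (x - t)) * (x - t) ^ (-(1/2):ℝ) :=
        mul_le_mul hm1 hg2 (hg_nonneg t hIoo.2.le) (by positivity)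
      refine hmul.trans (le_of_eq ?_)
      rw [div_eq_mul_inv, mul_assoc]
      congr 1
      rw [show ((x-t)⁻¹ : ℝ) = (x-t) ^ (-(1:ℝ)) from (Real.rpow_neg_one _).symm,
        ← Real.rpow_add hxt]
      norm_num
    have hm2_Icc : IntegrableOn m2 (Icc (x-2) (x-δ)) := by
      have h1 := (hbase.comp_sub_left x).symm
      have h2 := h1.const_mul δ
      rw [show x - δ = x - δ from rfl] at h2
      have : IntervalIntegrable m2 volume (x-2) (x-δ) := by
        simpa [hm2] using h2
      rw [integrableOn_Icc_iff_integrableOn_Ioc]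
      exact (intervalIntegrable_iff_integrableOn_Ioc_of_le (by linarith)).1 this
    have hm2_nonneg : ∀ t ∈ Icc (x-2) (x-δ), 0 ≤ m2 t := by
      rintro t ⟨_, h2⟩
      exact mul_nonneg hδ.le (Real.rpow_nonneg (by linarith) _)
    have step1 : (∫ t in S2, f t) ≤ ∫ t in S2, m2 t :=
      setIntegral_mono_on (hf_intS S2 hS2sub) (hm2_Icc.mono_set hsub) hS2m hptwise
    have step2 : (∫ t in S2, m2 t) ≤ ∫ t in Icc (x-2) (x-δ), m2 t := by
      apply setIntegral_mono_set hm2_Icc ?_ (HasSubset.Subset.eventuallyLE hsub)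
      filter_upwards [ae_restrict_mem measurableSet_Icc] with t ht
      exact hm2_nonneg t ht
    have step3 : (∫ t in Icc (x-2) (x-δ), m2 t) = δ * ∫ s in δ..2, s ^ (-(3/2):ℝ) := by
      rw [integral_Icc_eq_integral_Ioc, ← intervalIntegral.integral_of_le (by linarith : x-2 ≤ x-δ)]
      have : (∫ t in (x-2)..(x-δ), m2 t) = δ * ∫ t in (x-2)..(x-δ), (x - t) ^ (-(3/2):ℝ) := by
        rw [← intervalIntegral.integral_const_mul]
      rw [this, intervalIntegral.integral_comp_sub_left (fun s => s ^ (-(3/2):ℝ)) x]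
      norm_num
    calc (∫ t in S2, f t) ≤ δ * ∫ s in δ..2, s ^ (-(3/2):ℝ) := by
          rw [← step3]; exact step1.trans step2
      _ ≤ 2 * Real.sqrt δ := htail
  -- B3
  have B3 : (∫ t in S3, f t) ≤ 2 * Real.sqrt δ := by
    set m3 : ℝ → ℝ := fun t => δ * (t - x) ^ (-(3/2):ℝ) with hm3
    have hsub : S3 ⊆ Icc (x+δ) (x+2) := by
      rintro t ⟨⟨hIoo, hIoi⟩, _⟩
      rw [mem_Ioi] at hIoi
      exact ⟨hIoi.le, by linarith [hIoo.2]⟩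
    have hptwise : ∀ t ∈ S3, f t ≤ m3 t := by
      rintro t ⟨⟨hIoo, hIoi⟩, hIic⟩
      rw [mem_Ioi] at hIoi
      rw [mem_Iic] at hIic
      have htx : 0 < t - x := by linarith
      have habs : |t - x| = t - x := abs_of_pos htx
      have hm1 : min 1 (δ / |t - x|) ≤ δ / (t - x) :=
        (min_le_right _ _).trans (le_of_eq (by rw [habs]))
      have hg2 : g t ≤ (t - x) ^ (-(1/2):ℝ) :=
        Real.rpow_le_rpow_of_nonpos htx (by linarith) (by norm_num)
      have hmul : f t ≤ (δ / (t - x)) * (t - x) ^ (-(1/2):ℝ) :=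
        mul_le_mul hm1 hg2 (hg_nonneg t hIoo.2.le) (by positivity)
      refine hmul.trans (le_of_eq ?_)
      rw [div_eq_mul_inv, mul_assoc]
      congr 1
      rw [show ((t-x)⁻¹ : ℝ) = (t-x) ^ (-(1:ℝ)) from (Real.rpow_neg_one _).symm,
        ← Real.rpow_add htx]
      norm_num
    have hm3_Icc : IntegrableOn m3 (Icc (x+δ) (x+2)) := by
      have h1 := hbase.comp_sub_right x
      have h2 := h1.const_mul δ
      have : IntervalIntegrable m3 volume (x+δ) (x+2) := by
        simpa [hm3, add_comm, sub_eq_add_neg] using h2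
      rw [integrableOn_Icc_iff_integrableOn_Ioc]
      exact (intervalIntegrable_iff_integrableOn_Ioc_of_le (by linarith)).1 this
    have hm3_nonneg : ∀ t ∈ Icc (x+δ) (x+2), 0 ≤ m3 t := by
      rintro t ⟨h1, _⟩
      exact mul_nonneg hδ.le (Real.rpow_nonneg (by linarith) _)
    have step1 : (∫ t in S3, f t) ≤ ∫ t in S3, m3 t :=
      setIntegral_mono_on (hf_intS S3 hS3sub) (hm3_Icc.mono_set hsub) hS3m hptwise
    have step2 : (∫ t in S3, m3 t) ≤ ∫ t in Icc (x+δ) (x+2), m3 t := by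
      apply setIntegral_mono_set hm3_Icc ?_ (HasSubset.Subset.eventuallyLE hsub)
      filter_upwards [ae_restrict_mem measurableSet_Icc] with t ht
      exact hm3_nonneg t ht
    have step3 : (∫ t in Icc (x+δ) (x+2), m3 t) = δ * ∫ s in δ..2, s ^ (-(3/2):ℝ) := by
      rw [integral_Icc_eq_integral_Ioc, ← intervalIntegral.integral_of_le (by linarith : x+δ ≤ x+2)]
      have : (∫ t in (x+δ)..(x+2), m3 t) = δ * ∫ t in (x+δ)..(x+2), (t - x) ^ (-(3/2):ℝ) := by
        rw [← intervalIntegral.integral_const_mul]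
      rw [this, intervalIntegral.integral_comp_sub_right (fun s => s ^ (-(3/2):ℝ)) x]
      norm_num [add_sub_cancel_left]
    calc (∫ t in S3, f t) ≤ δ * ∫ s in δ..2, s ^ (-(3/2):ℝ) := by
          rw [← step3]; exact step1.trans step2
      _ ≤ 2 * Real.sqrt δ := htail
  -- B4
  have B4 : (∫ t in S4, f t) ≤ 3 * Real.sqrt δ := by
    rcases le_or_gt 1 (x + δ) with hcase | hcase
    · have hempty : S4 = ∅ := by
        ext t
        simp only [hS4, hS34, mem_inter_iff, mem_Ioo, mem_Ioi, mem_empty_iff_false, iff_false]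
        rintro ⟨⟨⟨_, h2⟩, h3⟩, _⟩
        linarith
      rw [hempty, setIntegral_empty]
      positivity
    · have h1x : 0 < 1 - x := by linarith
      set c : ℝ := Real.sqrt (δ * (1-x) / 2) with hc
      have hcpos : 0 < c := Real.sqrt_pos.mpr (by positivity)
      set K : ℝ := δ / c with hK
      have hKpos : 0 < K := by positivity
      have hsub : S4 ⊆ Icc ((1+x)/2) 1 := by
        rintro t ⟨⟨hIoo, _⟩, hIoi⟩
        rw [mem_Ioi] at hIoi
        exact ⟨hIoi.le, hIoo.2.le⟩
      have hptwise : ∀ t ∈ S4, f t ≤ K * g t := by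
        rintro t ⟨⟨hIoo, hIoi⟩, hIoi2⟩
        rw [mem_Ioi] at hIoi hIoi2
        have htx : 0 < t - x := by linarith
        have hsq : δ * (1-x) / 2 ≤ (t-x)^2 := by nlinarith
        have hct : c ≤ t - x := by
          rw [hc]
          calc Real.sqrt (δ * (1-x)/2) ≤ Real.sqrt ((t-x)^2) := Real.sqrt_le_sqrt hsq
            _ = t - x := Real.sqrt_sq htx.le
        have habs : |t - x| = t - x := abs_of_pos htx
        have hm1 : min 1 (δ / |t - x|) ≤ δ / (t - x) :=
          (min_le_right _ _).trans (le_of_eq (by rw [habs]))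
        have hm1' : δ / (t - x) ≤ K := div_le_div_of_nonneg_left hδ.le hcpos hct
        calc f t ≤ (δ / (t-x)) * g t :=
              mul_le_mul_of_nonneg_right (hm1.trans le_rfl) (hg_nonneg t hIoo.2.le)
          _ ≤ K * g t := mul_le_mul_of_nonneg_right hm1' (hg_nonneg t hIoo.2.le)
      have hKg_Icc : IntegrableOn (fun t => K * g t) (Icc ((1+x)/2) 1) :=
        (hg_int_Icc _ _).const_mul K
      have step1 : (∫ t in S4, f t) ≤ ∫ t in S4, K * g t :=
        setIntegral_mono_on (hf_intS S4 hS4sub) (hKg_Icc.mono_set hsub) hS4m hptwise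
      have step2 : (∫ t in S4, K * g t) ≤ ∫ t in Icc ((1+x)/2) 1, K * g t := by
        apply setIntegral_mono_set hKg_Icc ?_ (HasSubset.Subset.eventuallyLE hsub)
        filter_upwards [ae_restrict_mem measurableSet_Icc] with t ht
        exact mul_nonneg hKpos.le (hg_nonneg t ht.2)
      have step3 : (∫ t in Icc ((1+x)/2) 1, K * g t)
          = K * (2 * ((1 - (1+x)/2) ^ ((1:ℝ)/2) - 0 ^ ((1:ℝ)/2))) := by
        rw [integral_Icc_eq_integral_Ioc,
          ← intervalIntegral.integral_of_le (by linarith : (1+x)/2 ≤ 1),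
          intervalIntegral.integral_const_mul, integral_one_sub_neg_half]
        norm_num
      have hzero : (0:ℝ) ^ ((1:ℝ)/2) = 0 := Real.zero_rpow (by norm_num)
      have hval : K * (2 * ((1 - (1+x)/2) ^ ((1:ℝ)/2) - 0 ^ ((1:ℝ)/2))) = 2 * Real.sqrt δ := by
        rw [hzero, sub_zero, show (1 - (1+x)/2 : ℝ) = (1-x)/2 by ring,
          show ((1-x)/2 : ℝ) ^ ((1:ℝ)/2) = Real.sqrt ((1-x)/2) from (Real.sqrt_eq_rpow _).symm,
          hK, hc, show δ * (1-x)/2 = δ * ((1-x)/2) by ring, Real.sqrt_mul hδ.le]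
        have hs2 : 0 < Real.sqrt ((1-x)/2) := Real.sqrt_pos.mpr (by positivity)
        have hsd : 0 < Real.sqrt δ := Real.sqrt_pos.mpr hδ
        rw [div_mul_eq_mul_div, div_eq_iff (by positivity : Real.sqrt δ * Real.sqrt ((1-x)/2) ≠ 0)]
        nth_rewrite 1 [show δ = Real.sqrt δ * Real.sqrt δ from (Real.mul_self_sqrt hδ.le).symm]
        ring
      calc (∫ t in S4, f t) ≤ K * (2 * ((1 - (1+x)/2) ^ ((1:ℝ)/2) - 0 ^ ((1:ℝ)/2))) := by
            rw [← step3]; exact step1.trans step2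
        _ = 2 * Real.sqrt δ := hval
        _ ≤ 3 * Real.sqrt δ := by linarith
  rw [hIsplit]
  linarith

lemma J_bound' {x δ : ℝ} (hx : x ∈ Icc (-1:ℝ) 1) (hδ : 0 < δ) (hδ2 : δ ≤ 2) :
    ∫ t in Ioo (-1:ℝ) 1, min 1 (δ / |t - x|) * (1 + t) ^ (-(1/2) : ℝ)
      ≤ 10 * Real.sqrt δ := by
  have hxm : -x ∈ Icc (-1:ℝ) 1 := ⟨by linarith [hx.2], by linarith [hx.1]⟩
  have hconv : (∫ t in Ioo (-1:ℝ) 1, min 1 (δ / |t - x|) * (1 + t) ^ (-(1/2) : ℝ))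
      = ∫ t in Ioo (-1:ℝ) 1, min 1 (δ / |t - (-x)|) * (1 - t) ^ (-(1/2) : ℝ) := by
    rw [← integral_Ioc_eq_integral_Ioo, ← integral_Ioc_eq_integral_Ioo,
      ← intervalIntegral.integral_of_le (by norm_num : (-1:ℝ) ≤ 1),
      ← intervalIntegral.integral_of_le (by norm_num : (-1:ℝ) ≤ 1)]
    have := intervalIntegral.integral_comp_neg (a := -1) (b := 1)
      (fun t => min 1 (δ / |t - (-x)|) * (1 - t) ^ (-(1/2) : ℝ))
    simp only [neg_neg] at this
    have hfun : (fun t : ℝ => min 1 (δ / |t - x|) * (1 + t) ^ (-(1/2) : ℝ))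
        = fun t : ℝ => min 1 (δ / |(-t) - (-x)|) * (1 - (-t)) ^ (-(1/2) : ℝ) := by
      funext t
      rw [show |(-t) - (-x)| = |t - x| by rw [show (-t) - (-x) = -(t - x) by ring, abs_neg],
        show (1 - -t : ℝ) = 1 + t by ring]
    rw [hfun]
    exact this
  rw [hconv]
  exact J_bound hxm hδ hδ2

lemma density_nonneg (t : ℝ) : 0 ≤ arcsineDensity t := by
  unfold arcsineDensity
  positivity

lemma density_measurable : Measurable arcsineDensity := by
  unfold arcsineDensity
  exact measurable_const.div
    (measurable_const.mul (Real.continuous_sqrt.measurable.comp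
      (measurable_const.sub (measurable_id.pow_const 2))))

lemma density_le {t : ℝ} (ht : t ∈ Ioo (-1:ℝ) 1) :
    arcsineDensity t ≤ (1/Real.pi) * ((1-t) ^ (-(1/2):ℝ) + (1+t) ^ (-(1/2):ℝ)) := by
  obtain ⟨h1, h2⟩ := ht
  have ha : (0:ℝ) < 1 - t := by linarith
  have hb : (0:ℝ) < 1 + t := by linarith
  have hsa : 0 < Real.sqrt (1-t) := Real.sqrt_pos.mpr ha
  have hsb : 0 < Real.sqrt (1+t) := Real.sqrt_pos.mpr hb
  have hfact : Real.sqrt (1 - t^2) = Real.sqrt (1-t) * Real.sqrt (1+t) := by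
    rw [show (1 - t^2 : ℝ) = (1-t)*(1+t) by ring, Real.sqrt_mul ha.le]
  have hsum : (1:ℝ) ≤ Real.sqrt (1-t) + Real.sqrt (1+t) := by
    have h := sqrt_add_le' (1-t) (1+t) ha.le hb.le
    rw [show (1-t) + (1+t) = (2:ℝ) by ring] at h
    have : (1:ℝ) ≤ Real.sqrt 2 := by
      rw [show (1:ℝ) = Real.sqrt 1 from (Real.sqrt_one).symm]
      exact Real.sqrt_le_sqrt (by norm_num)
    linarith
  have hra : (1-t) ^ (-(1/2):ℝ) = 1 / Real.sqrt (1-t) := by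
    rw [Real.rpow_neg ha.le, Real.sqrt_eq_rpow]
    exact (one_div _).symm
  have hrb : (1+t) ^ (-(1/2):ℝ) = 1 / Real.sqrt (1+t) := by
    rw [Real.rpow_neg hb.le, Real.sqrt_eq_rpow]
    exact (one_div _).symm
  unfold arcsineDensity
  rw [hfact, hra, hrb]
  have hpi := Real.pi_pos
  have hrhs : (1/Real.pi) * (1/Real.sqrt (1-t) + 1/Real.sqrt (1+t))
      = (Real.sqrt (1+t) + Real.sqrt (1-t)) / (Real.pi * (Real.sqrt (1-t) * Real.sqrt (1+t))) := by
    field_simp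
  rw [hrhs, div_le_div_iff₀ (by positivity) (by positivity)]
  nlinarith [mul_pos hsa hsb, mul_pos (mul_pos hpi hsa) hsb]

lemma ii_one_add_rpow (r : ℝ) (hr : -1 < r) (a b : ℝ) :
    IntervalIntegrable (fun t => (1 + t) ^ r) volume a b := by
  have h := intervalIntegral.intervalIntegrable_rpow' (a := 1 + a) (b := 1 + b) hr
  have h2 := h.comp_add_left 1
  simpa using h2

lemma int_Ioo_one_add : IntegrableOn (fun t : ℝ => (1 + t) ^ (-(1/2):ℝ)) (Ioo (-1:ℝ) 1) := by
  have h := (intervalIntegrable_iff_integrableOn_Ioc_of_le (by norm_num : (-1:ℝ) ≤ 1)).1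
    (ii_one_add_rpow (-(1/2)) (by norm_num) (-1) 1)
  exact h.mono_set Ioo_subset_Ioc_self

lemma int_Ioo_one_sub : IntegrableOn (fun t : ℝ => (1 - t) ^ (-(1/2):ℝ)) (Ioo (-1:ℝ) 1) := by
  have h := (intervalIntegrable_iff_integrableOn_Ioc_of_le (by norm_num : (-1:ℝ) ≤ 1)).1
    (ii_one_sub_rpow (-(1/2)) (by norm_num) (-1) 1)
  exact h.mono_set Ioo_subset_Ioc_self

lemma min_kernel_measurable (x δ : ℝ) : Measurable (fun t : ℝ => min 1 (δ / |t - x|)) :=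
  measurable_const.min (measurable_const.div ((measurable_id.sub_const x).abs))

lemma min_kernel_nonneg (x δ : ℝ) (hδ : 0 ≤ δ) (t : ℝ) : 0 ≤ min 1 (δ / |t - x|) :=
  le_min (by norm_num) (by positivity)

lemma min_kernel_le_one (x δ : ℝ) (t : ℝ) : min 1 (δ / |t - x|) ≤ 1 := min_le_left _ _

lemma density_integrable : IntegrableOn arcsineDensity (Ioo (-1:ℝ) 1) := by
  apply Integrable.mono'
    (((int_Ioo_one_sub.add int_Ioo_one_add).const_mul (1/Real.pi)))
    density_measurable.aestronglyMeasurable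
  filter_upwards [ae_restrict_mem measurableSet_Ioo] with t ht
  rw [Real.norm_eq_abs, abs_of_nonneg (density_nonneg t)]
  exact density_le ht

lemma min_density_integrable (x δ : ℝ) (hδ : 0 ≤ δ) :
    IntegrableOn (fun t => min 1 (δ / |t - x|) * arcsineDensity t) (Ioo (-1:ℝ) 1) := by
  apply Integrable.mono' density_integrable
    ((min_kernel_measurable x δ).mul density_measurable).aestronglyMeasurable
  filter_upwards [] with t
  simp only [Pi.mul_apply]
  rw [Real.norm_eq_abs, abs_of_nonneg (mul_nonneg (min_kernel_nonneg x δ hδ t) (density_nonneg t))]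
  calc min 1 (δ / |t - x|) * arcsineDensity t ≤ 1 * arcsineDensity t :=
        mul_le_mul_of_nonneg_right (min_kernel_le_one x δ t) (density_nonneg t)
    _ = arcsineDensity t := one_mul _

lemma min_onesub_integrable (x δ : ℝ) (hδ : 0 ≤ δ) :
    IntegrableOn (fun t => min 1 (δ / |t - x|) * (1 - t) ^ (-(1/2):ℝ)) (Ioo (-1:ℝ) 1) := by
  apply Integrable.mono' int_Ioo_one_sub
    ((min_kernel_measurable x δ).mul
      ((measurable_const.sub measurable_id).pow measurable_const)).aestronglyMeasurable
  filter_upwards [ae_restrict_mem measurableSet_Ioo] with t ht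
  have hg : (0:ℝ) ≤ (1 - t) ^ (-(1/2):ℝ) := Real.rpow_nonneg (by linarith [ht.2]) _
  simp only [id_eq, Real.norm_eq_abs, Pi.mul_apply, Pi.sub_apply, Pi.add_apply]
  rw [abs_of_nonneg (mul_nonneg (min_kernel_nonneg x δ hδ t) hg)]
  calc min 1 (δ / |t - x|) * (1 - t) ^ (-(1/2):ℝ) ≤ 1 * (1 - t) ^ (-(1/2):ℝ) :=
        mul_le_mul_of_nonneg_right (min_kernel_le_one x δ t) hg
    _ = (1 - t) ^ (-(1/2):ℝ) := one_mul _

lemma min_oneadd_integrable (x δ : ℝ) (hδ : 0 ≤ δ) :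
    IntegrableOn (fun t => min 1 (δ / |t - x|) * (1 + t) ^ (-(1/2):ℝ)) (Ioo (-1:ℝ) 1) := by
  apply Integrable.mono' int_Ioo_one_add
    ((min_kernel_measurable x δ).mul
      ((measurable_const.add measurable_id).pow measurable_const)).aestronglyMeasurable
  filter_upwards [ae_restrict_mem measurableSet_Ioo] with t ht
  have hg : (0:ℝ) ≤ (1 + t) ^ (-(1/2):ℝ) := Real.rpow_nonneg (by linarith [ht.1]) _
  simp only [id_eq, Real.norm_eq_abs, Pi.mul_apply, Pi.sub_apply, Pi.add_apply]
  rw [abs_of_nonneg (mul_nonneg (min_kernel_nonneg x δ hδ t) hg)]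
  calc min 1 (δ / |t - x|) * (1 + t) ^ (-(1/2):ℝ) ≤ 1 * (1 + t) ^ (-(1/2):ℝ) :=
        mul_le_mul_of_nonneg_right (min_kernel_le_one x δ t) hg
    _ = (1 + t) ^ (-(1/2):ℝ) := one_mul _

lemma kernel_density_bound {x δ : ℝ} (hx : x ∈ Icc (-1:ℝ) 1) (hδ : 0 < δ) (hδ2 : δ ≤ 2) :
    ∫ t in Ioo (-1:ℝ) 1, min 1 (δ / |t - x|) * arcsineDensity t ≤ 7 * Real.sqrt δ := by
  have hpi := Real.pi_pos
  have step1 : (∫ t in Ioo (-1:ℝ) 1, min 1 (δ / |t - x|) * arcsineDensity t)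
      ≤ ∫ t in Ioo (-1:ℝ) 1, (1/Real.pi) * (min 1 (δ / |t - x|) * (1 - t) ^ (-(1/2):ℝ)
          + min 1 (δ / |t - x|) * (1 + t) ^ (-(1/2):ℝ)) := by
    apply setIntegral_mono_on (min_density_integrable x δ hδ.le)
      ((((min_onesub_integrable x δ hδ.le).add (min_oneadd_integrable x δ hδ.le)).const_mul
        (1/Real.pi))) measurableSet_Ioo
    intro t ht
    have h := density_le ht
    calc min 1 (δ / |t - x|) * arcsineDensity t
        ≤ min 1 (δ / |t - x|) * ((1/Real.pi) * ((1-t) ^ (-(1/2):ℝ) + (1+t) ^ (-(1/2):ℝ))) :=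
          mul_le_mul_of_nonneg_left h (min_kernel_nonneg x δ hδ.le t)
      _ = (1/Real.pi) * (min 1 (δ / |t - x|) * (1 - t) ^ (-(1/2):ℝ)
          + min 1 (δ / |t - x|) * (1 + t) ^ (-(1/2):ℝ)) := by ring
  have step2 : (∫ t in Ioo (-1:ℝ) 1, (1/Real.pi) * (min 1 (δ / |t - x|) * (1 - t) ^ (-(1/2):ℝ)
          + min 1 (δ / |t - x|) * (1 + t) ^ (-(1/2):ℝ)))
      = (1/Real.pi) * ((∫ t in Ioo (-1:ℝ) 1, min 1 (δ / |t - x|) * (1 - t) ^ (-(1/2):ℝ))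
          + ∫ t in Ioo (-1:ℝ) 1, min 1 (δ / |t - x|) * (1 + t) ^ (-(1/2):ℝ)) := by
    rw [MeasureTheory.integral_const_mul, integral_add (min_onesub_integrable x δ hδ.le)
      (min_oneadd_integrable x δ hδ.le)]
  rw [step2] at step1
  refine step1.trans ?_
  have hJ1 := J_bound hx hδ hδ2
  have hJ2 := J_bound' hx hδ hδ2
  have hπ3 : (3:ℝ) < Real.pi := Real.pi_gt_three
  have hsq : 0 ≤ Real.sqrt δ := Real.sqrt_nonneg δ
  have hsum : (∫ t in Ioo (-1:ℝ) 1, min 1 (δ / |t - x|) * (1 - t) ^ (-(1/2):ℝ))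
          + (∫ t in Ioo (-1:ℝ) 1, min 1 (δ / |t - x|) * (1 + t) ^ (-(1/2):ℝ))
      ≤ 20 * Real.sqrt δ := by linarith
  calc (1/Real.pi) * ((∫ t in Ioo (-1:ℝ) 1, min 1 (δ / |t - x|) * (1 - t) ^ (-(1/2):ℝ))
          + ∫ t in Ioo (-1:ℝ) 1, min 1 (δ / |t - x|) * (1 + t) ^ (-(1/2):ℝ))
      ≤ (1/Real.pi) * (20 * Real.sqrt δ) := by
        apply mul_le_mul_of_nonneg_left hsum (by positivity)
    _ ≤ 7 * Real.sqrt δ := by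
        rw [div_mul_eq_mul_div, div_le_iff₀ hpi]
        nlinarith

lemma taylorRemainderQuot_measurable (φ : ℝ → ℝ) (hφc : Continuous φ) (k : ℕ) (z : ℝ) :
    Measurable (fun t => taylorRemainderQuot φ k z t) := by
  unfold taylorRemainderQuot taylorPoly
  apply Measurable.div
  · apply hφc.measurable.sub
    apply Finset.measurable_sum
    intro i _
    exact ((continuous_const.mul ((continuous_id.sub continuous_const).pow i)).div_const
      _).measurable
  · exact ((continuous_id.sub continuous_const).pow (k+1)).measurable

/-- for `φ ∈ C^{k,1}([-1,1])`, the map `x ↦ ∫ F_k(x,t) ϱ(dt)`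
is `α`-Hölder continuous on `[-1,1]` for every `α ≤ 1/2`. -/
theorem finite_hilbert_kernel_holder (k : ℕ) (φ : ℝ → ℝ) (hφ : ContDiff ℝ k φ)
    (Hc : ℝ)
    (hLip : ∀ x ∈ Icc (-1 : ℝ) 1, ∀ y ∈ Icc (-1 : ℝ) 1,
      |iteratedDeriv k φ x - iteratedDeriv k φ y| ≤ Hc * |x - y|) :
    ∀ α : ℝ, 0 < α → α ≤ 1 / 2 →
      ∃ C : ℝ, 0 < C ∧ ∀ x ∈ Icc (-1 : ℝ) 1, ∀ y ∈ Icc (-1 : ℝ) 1,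
        |(∫ t in Ioo (-1 : ℝ) 1, taylorRemainderQuot φ k x t * arcsineDensity t)
            - ∫ t in Ioo (-1 : ℝ) 1, taylorRemainderQuot φ k y t * arcsineDensity t|
          ≤ C * |x - y| ^ α := by
  intro α hα hα2
  set L := max Hc 0 with hLdef
  have hL0 : 0 ≤ L := le_max_right _ _
  have hLip' : ∀ x ∈ Icc (-1 : ℝ) 1, ∀ y ∈ Icc (-1 : ℝ) 1,
      |iteratedDeriv k φ x - iteratedDeriv k φ y| ≤ L * |x - y| := fun x hx y hy =>
    (hLip x hx y hy).trans (mul_le_mul_of_nonneg_right (le_max_left _ _) (abs_nonneg _))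
  set C₁ := ((k:ℝ)+2)^2 * 2^(k+4) * L with hC₁def
  have hC₁0 : 0 ≤ C₁ := by positivity
  refine ⟨14*C₁ + 1, by positivity, ?_⟩
  intro x hx y hy
  have hFint : ∀ z ∈ Icc (-1:ℝ) 1,
      IntegrableOn (fun t => taylorRemainderQuot φ k z t * arcsineDensity t)
        (Ioo (-1:ℝ) 1) := by
    intro z hz
    apply Integrable.mono' (density_integrable.const_mul (((k:ℝ)+1)*L))
      ((taylorRemainderQuot_measurable φ hφ.continuous k z).mul
        density_measurable).aestronglyMeasurable
    filter_upwards [ae_restrict_mem measurableSet_Ioo] with t ht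
    simp only [Pi.mul_apply]
    rw [Real.norm_eq_abs, abs_mul, abs_of_nonneg (density_nonneg t)]
    exact mul_le_mul_of_nonneg_right (F_bound hφ hLip' hL0 hz (Ioo_subset_Icc_self ht))
      (density_nonneg t)
  rcases eq_or_ne x y with rfl | hxy
  · rw [sub_self, abs_zero, sub_self, abs_zero]
    positivity
  · set δ := |x - y| with hδdef
    have hδpos : 0 < δ := abs_pos.mpr (sub_ne_zero.mpr hxy)
    have hδ2 : δ ≤ 2 := by
      rw [hδdef, abs_le]
      constructor <;> [linarith [hx.1, hy.2]; linarith [hx.2, hy.1]]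
    have hne : ∀ᵐ t ∂(volume.restrict (Ioo (-1:ℝ) 1)), t ≠ x := by
      apply ae_restrict_of_ae
      rw [Filter.eventually_iff, mem_ae_iff]
      have : {t : ℝ | t ≠ x}ᶜ = {x} := by
        ext u; simp
      rw [this]
      exact volume_singleton
    have hstepA : |(∫ t in Ioo (-1 : ℝ) 1, taylorRemainderQuot φ k x t * arcsineDensity t)
            - ∫ t in Ioo (-1 : ℝ) 1, taylorRemainderQuot φ k y t * arcsineDensity t|
        ≤ C₁ * (7 * Real.sqrt δ) := by
      rw [← integral_sub (hFint x hx) (hFint y hy)]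
      have hmaj : Integrable (fun t => C₁ * (min 1 (δ/|t - x|) * arcsineDensity t))
          (volume.restrict (Ioo (-1:ℝ) 1)) :=
        (min_density_integrable x δ hδpos.le).const_mul C₁
      have hae : ∀ᵐ t ∂(volume.restrict (Ioo (-1:ℝ) 1)),
          ‖taylorRemainderQuot φ k x t * arcsineDensity t
            - taylorRemainderQuot φ k y t * arcsineDensity t‖
          ≤ C₁ * (min 1 (δ/|t - x|) * arcsineDensity t) := by
        filter_upwards [ae_restrict_mem measurableSet_Ioo, hne] with t ht htne
        rw [Real.norm_eq_abs, show taylorRemainderQuot φ k x t * arcsineDensity t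
            - taylorRemainderQuot φ k y t * arcsineDensity t
            = (taylorRemainderQuot φ k x t - taylorRemainderQuot φ k y t) * arcsineDensity t
            from by ring, abs_mul, abs_of_nonneg (density_nonneg t), ← mul_assoc]
        exact mul_le_mul_of_nonneg_right
          (pointwise_diff_bound hφ hLip' hL0 hx hy (Ioo_subset_Icc_self ht) htne)
          (density_nonneg t)
      have hkey := norm_integral_le_of_norm_le hmaj hae
      rw [Real.norm_eq_abs] at hkey
      refine hkey.trans ?_
      rw [MeasureTheory.integral_const_mul]
      exact mul_le_mul_of_nonneg_left (kernel_density_bound hx hδpos hδ2) hC₁0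
    have hδα : Real.sqrt δ ≤ 2 * δ ^ α := by
      rw [Real.sqrt_eq_rpow, show (1/2:ℝ) = α + (1/2 - α) from by ring, Real.rpow_add hδpos]
      have h2 : δ ^ (1/2 - α:ℝ) ≤ 2 ^ (1/2 - α:ℝ) :=
        Real.rpow_le_rpow hδpos.le hδ2 (by linarith)
      have h3 : (2:ℝ) ^ (1/2 - α:ℝ) ≤ 2 ^ (1:ℝ) :=
        Real.rpow_le_rpow_of_exponent_le one_le_two (by linarith)
      rw [Real.rpow_one] at h3
      have h4 : 0 ≤ δ ^ (α:ℝ) := Real.rpow_nonneg hδpos.le α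
      nlinarith
    refine hstepA.trans ?_
    have h4 : 0 ≤ δ ^ (α:ℝ) := Real.rpow_nonneg hδpos.le α
    have hsq : 0 ≤ Real.sqrt δ := Real.sqrt_nonneg δ
    nlinarith
end
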